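/- arXiv:0908.3316 — 4 statements merged into one kernel-verified Lean document; each statement's English description precedes it below -/
import Mathlib

section
/- Let b ≥ 1 > c ≥ 0 and a > 0, with b > 1 if c = 0. Define R(x) = ax/((−ab+a+c)x+ab) and T(x) = a/(x+a). Then the orbit of any x ∈ [0,1] under the semigroup generated by R and T is dense in [0,1]. -/
namespace Stmt12

noncomputable section

open Real

open scoped Classical

/-- affine map -/
def fv (b c v : ℝ) : ℝ := b * v + c
/-- inversion map -/
def gv (a v : ℝ) : ℝ := a / (a + v)

def ee (b c : ℝ) : ℕ → ℝ
  | 0 => 0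
  | n+1 => b * ee b c n + c

def EE (b c : ℝ) (n : ℕ) : ℝ := ee b c n + b ^ n

variable {a b c : ℝ}

lemma ee_nonneg (hb : 1 ≤ b) (hc0 : 0 ≤ c) : ∀ n, 0 ≤ ee b c n
  | 0 => le_refl _
  | n+1 => by
      have := ee_nonneg hb hc0 n
      have hb0 : (0:ℝ) ≤ b := le_trans zero_le_one hb
      simp only [ee]; positivity

lemma ee_succ (n : ℕ) : ee b c (n+1) = ee b c n + c * b ^ n := by
  induction n with
  | zero => simp [ee]
  | succ n ih =>
      have h1 : ee b c (n+1+1) = b * ee b c (n+1) + c := rfl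
      have h2 : ee b c (n+1) = b * ee b c n + c := rfl
      rw [h1]
      conv_lhs => rw [ih]
      rw [h2]; ring

lemma iterate_fv (n : ℕ) (v : ℝ) : (fv b c)^[n] v = b ^ n * v + ee b c n := by
  induction n with
  | zero => simp [ee]
  | succ n ih =>
      rw [Function.iterate_succ_apply', ih]
      show b * (b ^ n * v + ee b c n) + c = b ^ (n+1) * v + ee b c (n+1)
      show b * (b ^ n * v + ee b c n) + c = b ^ (n+1) * v + (b * ee b c n + c)
      ring

lemma fv_pos (hb : 1 ≤ b) (hc0 : 0 ≤ c) {v : ℝ} (hv : 0 < v) : 0 < fv b c v := by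
  have : v ≤ b * v := le_mul_of_one_le_left hv.le hb
  simp only [fv]; linarith

lemma fv_ge (hb : 1 ≤ b) (hc0 : 0 ≤ c) {v : ℝ} (hv : 0 ≤ v) : v ≤ fv b c v := by
  have : v ≤ b * v := le_mul_of_one_le_left hv hb
  simp only [fv]; linarith

lemma gv_pos (ha : 0 < a) {v : ℝ} (hv : 0 ≤ v) : 0 < gv a v := by
  simp only [gv]; positivity

lemma gv_le_one (ha : 0 < a) {v : ℝ} (hv : 0 ≤ v) : gv a v ≤ 1 := by
  rw [gv, div_le_one (by linarith)]; linarith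

lemma EE_ge (hb : 1 ≤ b) (hc0 : 0 ≤ c) (n : ℕ) : 1 + n * (b - 1 + c) ≤ EE b c n := by
  induction n with
  | zero => simp [EE, ee]
  | succ n ih =>
      have hbn : (1:ℝ) ≤ b ^ n := one_le_pow₀ hb
      have hEn : EE b c (n+1) = EE b c n + c * b ^ n + (b-1) * b ^ n := by
        rw [EE, EE, ee_succ]
        have : b ^ (n+1) = b * b ^ n := by ring
        rw [this]; ring
      have h1 : c * 1 ≤ c * b ^ n := by
        apply mul_le_mul_of_nonneg_left hbn hc0
      have h2 : (b-1) * 1 ≤ (b-1) * b ^ n := by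
        apply mul_le_mul_of_nonneg_left hbn (by linarith)
      rw [hEn]
      push_cast
      linarith

/-- branch index -/
def mm (b c s : ℝ) : ℕ := sInf {m : ℕ | s < EE b c m}

/-- backward pullback map -/
def step (a b c s : ℝ) : ℝ := a * b ^ (mm b c s) / (s - ee b c (mm b c s)) - a

lemma exE (hb : 1 ≤ b) (hc0 : 0 ≤ c) (hd : 0 < b - 1 + c) (s : ℝ) :
    {m : ℕ | s < EE b c m}.Nonempty := by
  obtain ⟨n, hn⟩ := exists_nat_gt ((s - 1) / (b - 1 + c))
  refine ⟨n, ?_⟩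
  have h1 : s - 1 < n * (b - 1 + c) := by
    rw [div_lt_iff₀ hd] at hn; linarith
  have := EE_ge hb hc0 n
  simp only [Set.mem_setOf_eq]
  linarith

lemma mm_spec (hb : 1 ≤ b) (hc0 : 0 ≤ c) (hd : 0 < b - 1 + c) (s : ℝ) :
    s < EE b c (mm b c s) :=
  Nat.sInf_mem (exE hb hc0 hd s)

lemma mm_min {s : ℝ} {k : ℕ} (hk : k < mm b c s) : ¬ s < EE b c k :=
  fun h => Nat.notMem_of_lt_sInf hk h

lemma mm_pos (hb : 1 ≤ b) (hc0 : 0 ≤ c) (hd : 0 < b - 1 + c) {s : ℝ} (hs : 1 ≤ s) :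
    0 < mm b c s := by
  rcases Nat.eq_zero_or_pos (mm b c s) with h | h
  · exfalso
    have := mm_spec hb hc0 hd s
    rw [h] at this
    simp only [EE, ee, pow_zero] at this
    linarith
  · exact h

lemma ee_lt_of_pos (hb : 1 ≤ b) (hc1 : c < 1)
    {s : ℝ} (hs : 0 < s) : ee b c (mm b c s) < s := by
  rcases Nat.eq_zero_or_pos (mm b c s) with h | h
  · rw [h]; simpa [ee] using hs
  · obtain ⟨k, hk⟩ := Nat.exists_eq_succ_of_ne_zero h.ne'
    have hmin : ¬ s < EE b c k := mm_min (by omega)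
    push_neg at hmin
    have hbk : (0:ℝ) < b ^ k := pow_pos (by linarith) k
    have : ee b c (k+1) = ee b c k + c * b ^ k := ee_succ k
    have hEk : EE b c k = ee b c k + b ^ k := rfl
    rw [hk, this]
    nlinarith

lemma step_pos (ha : 0 < a) (hb : 1 ≤ b) (hc0 : 0 ≤ c) (hc1 : c < 1) (hd : 0 < b - 1 + c)
    {s : ℝ} (hs : 0 < s) : 0 < step a b c s := by
  have h1 : ee b c (mm b c s) < s := ee_lt_of_pos hb hc1 hs
  have h2 : s < EE b c (mm b c s) := mm_spec hb hc0 hd s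
  have h3 : s - ee b c (mm b c s) < b ^ (mm b c s) := by
    have : EE b c (mm b c s) = ee b c (mm b c s) + b ^ (mm b c s) := rfl
    linarith [h2, this]
  have h4 : 0 < s - ee b c (mm b c s) := by linarith
  rw [step, sub_pos, lt_div_iff₀ h4]
  calc a * (s - ee b c (mm b c s)) < a * b ^ (mm b c s) := by
        exact mul_lt_mul_of_pos_left h3 ha
    _ = a * b ^ (mm b c s) := rfl

lemma step_le (ha : 0 < a) (hb : 1 ≤ b) (hc0 : 0 ≤ c) (hc1 : c < 1) (hd : 0 < b - 1 + c)
    {s : ℝ} (hs : 1 ≤ s) : step a b c s ≤ max 1 (a * b / (1 - c)) := by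
  have hm : 0 < mm b c s := mm_pos hb hc0 hd hs
  obtain ⟨k, hk⟩ := Nat.exists_eq_succ_of_ne_zero hm.ne'
  have hmin : ¬ s < EE b c k := mm_min (by omega)
  push_neg at hmin
  have hbk : (0:ℝ) < b ^ k := pow_pos (by linarith) k
  have hden : (1 - c) * b ^ k ≤ s - ee b c (mm b c s) := by
    rw [hk, ee_succ k]
    have : EE b c k = ee b c k + b ^ k := rfl
    rw [this] at hmin
    nlinarith
  have hdenpos : (0:ℝ) < (1 - c) * b ^ k := mul_pos (by linarith) hbk
  have h1 : step a b c s ≤ a * b ^ (mm b c s) / ((1 - c) * b ^ k) - a := by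
    rw [step]
    have hb0 : (0:ℝ) < b := by linarith
    have : a * b ^ (mm b c s) / (s - ee b c (mm b c s)) ≤ a * b ^ (mm b c s) / ((1-c) * b ^ k) := by
      apply div_le_div_of_nonneg_left _ hdenpos hden
      positivity
    linarith
  have h2 : a * b ^ (mm b c s) / ((1 - c) * b ^ k) = a * b / (1 - c) := by
    rw [hk, pow_succ, div_eq_div_iff hdenpos.ne' (by linarith : (0:ℝ) < 1 - c).ne']
    ring
  calc step a b c s ≤ a * b / (1 - c) - a := by rw [← h2]; exact h1
    _ ≤ a * b / (1 - c) := by linarith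
    _ ≤ max 1 (a * b / (1 - c)) := le_max_right _ _

lemma phi_eq (ha : 0 < a) (hb : 1 ≤ b) (hc0 : 0 ≤ c) (hc1 : c < 1) (hd : 0 < b - 1 + c)
    {s : ℝ} (hs : 0 < s) :
    (fv b c)^[mm b c s] (gv a (step a b c s)) = s := by
  have h1 : ee b c (mm b c s) < s := ee_lt_of_pos hb hc1 hs
  have h4 : 0 < s - ee b c (mm b c s) := by linarith
  have hbm : (0:ℝ) < b ^ (mm b c s) := pow_pos (by linarith) _
  have hg : gv a (step a b c s) = (s - ee b c (mm b c s)) / b ^ (mm b c s) := by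
    rw [gv, step]
    have hA : a + (a * b ^ (mm b c s) / (s - ee b c (mm b c s)) - a)
        = a * b ^ (mm b c s) / (s - ee b c (mm b c s)) := by ring
    have hb0 : (0:ℝ) < b := by linarith
    rw [hA, div_div_eq_mul_div, div_eq_div_iff (by positivity) hbm.ne']
    ring
  rw [hg, iterate_fv]
  field_simp
  ring

lemma log_sub_log_le {u v u' v' : ℝ} (hv : 0 < v) (hu : 0 < u) (hv' : 0 < v')
    (hu' : 0 < u') (hvu : v ≤ u) (hvu' : v' ≤ u')
    (hcross : u' * v ≤ u * v') :
    Real.log u' - Real.log v' ≤ Real.log u - Real.log v := by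
  rw [← Real.log_div hu'.ne' hv'.ne', ← Real.log_div hu.ne' hv.ne']
  apply Real.log_le_log (by positivity)
  rw [div_le_div_iff₀ hv' hv]
  linarith [hcross]

/-- 1-Lipschitz of x ↦ bx+c in log metric -/
lemma lip_fv (hb : 1 ≤ b) (hc0 : 0 ≤ c) {u v : ℝ} (hu : 0 < u) (hv : 0 < v) :
    |Real.log (fv b c u) - Real.log (fv b c v)| ≤ |Real.log u - Real.log v| := by
  wlog hvu : v ≤ u generalizing u v
  · rw [abs_sub_comm, abs_sub_comm (Real.log u)]
    exact this hv hu (by linarith)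
  have hfu : 0 < fv b c u := fv_pos hb hc0 hu
  have hfv : 0 < fv b c v := fv_pos hb hc0 hv
  have hmono : fv b c v ≤ fv b c u := by
    simp only [fv]; nlinarith
  have h1 : Real.log (fv b c v) ≤ Real.log (fv b c u) := Real.log_le_log hfv hmono
  have h2 : Real.log v ≤ Real.log u := Real.log_le_log hv hvu
  rw [abs_of_nonneg (by linarith), abs_of_nonneg (by linarith)]
  apply log_sub_log_le hv hu hfv hfu hvu hmono
  simp only [fv]; nlinarith

lemma lip_fv_iter (hb : 1 ≤ b) (hc0 : 0 ≤ c) (n : ℕ) {u v : ℝ} (hu : 0 < u) (hv : 0 < v) :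
    |Real.log ((fv b c)^[n] u) - Real.log ((fv b c)^[n] v)| ≤ |Real.log u - Real.log v| := by
  induction n with
  | zero => simp
  | succ n ih =>
      have hpu : 0 < (fv b c)^[n] u := by
        rw [iterate_fv]
        have := ee_nonneg hb hc0 n
        have : (0:ℝ) < b ^ n := pow_pos (by linarith) n
        nlinarith [ee_nonneg hb hc0 n]
      have hpv : 0 < (fv b c)^[n] v := by
        rw [iterate_fv]
        have : (0:ℝ) < b ^ n := pow_pos (by linarith) n
        nlinarith [ee_nonneg hb hc0 n]
      rw [Function.iterate_succ_apply', Function.iterate_succ_apply']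
      exact le_trans (lip_fv hb hc0 hpu hpv) ih

/-- 1-Lipschitz of gv in log metric -/
lemma lip_gv (ha : 0 < a) {u v : ℝ} (hu : 0 < u) (hv : 0 < v) :
    |Real.log (gv a u) - Real.log (gv a v)| ≤ |Real.log u - Real.log v| := by
  wlog hvu : v ≤ u generalizing u v
  · rw [abs_sub_comm, abs_sub_comm (Real.log u)]
    exact this hv hu (by linarith)
  have hgu : 0 < gv a u := gv_pos ha hu.le
  have hgv : 0 < gv a v := gv_pos ha hv.le
  have hmono : gv a u ≤ gv a v := by
    rw [gv, gv]
    apply div_le_div_of_nonneg_left ha.le (by linarith) (by linarith)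
  have h2 : Real.log v ≤ Real.log u := Real.log_le_log hv hvu
  have h1 : Real.log (gv a u) ≤ Real.log (gv a v) := Real.log_le_log hgu hmono
  rw [abs_of_nonpos (by linarith), abs_of_nonneg (by linarith), neg_sub]
  have hau : 0 < a + u := by linarith
  have hav : 0 < a + v := by linarith
  have hlu : Real.log (gv a u) = Real.log a - Real.log (a + u) := by
    rw [gv, Real.log_div ha.ne' hau.ne']
  have hlv : Real.log (gv a v) = Real.log a - Real.log (a + v) := by
    rw [gv, Real.log_div ha.ne' hav.ne']
  rw [hlu, hlv]
  have := log_sub_log_le hv hu hav hau hvu (by linarith)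
    (by nlinarith : (a + u) * v ≤ u * (a + v))
  linarith

/-- strong contraction of gv on (0,N] -/
lemma lip_gv_strong (ha : 0 < a) {N u v : ℝ} (hN : 0 < N)
    (hu : 0 < u) (huN : u ≤ N) (hv : 0 < v) (hvN : v ≤ N) :
    |Real.log (gv a u) - Real.log (gv a v)| ≤ (N / (N + a)) * |Real.log u - Real.log v| := by
  wlog hvu : v ≤ u generalizing u v
  · rw [abs_sub_comm, abs_sub_comm (Real.log u)]
    exact this hv hvN hu huN (by linarith)
  set lam := N / (N + a) with hlam
  have hlam0 : 0 < lam := by positivity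
  have hF : MonotoneOn (fun x => lam * Real.log x - Real.log (a + x)) (Set.Ioc 0 N) := by
    have hderiv : ∀ x ∈ Set.Ioc (0:ℝ) N,
        HasDerivAt (fun x => lam * Real.log x - Real.log (a + x)) (lam * x⁻¹ - (a + x)⁻¹) x := by
      intro x hx
      have hx0 : 0 < x := hx.1
      have hax : 0 < a + x := by linarith
      have h1 : HasDerivAt (fun x : ℝ => lam * Real.log x) (lam * x⁻¹) x :=
        (Real.hasDerivAt_log hx0.ne').const_mul lam
      have h2 : HasDerivAt (fun x : ℝ => Real.log (a + x)) ((a + x)⁻¹) x := by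
        have h3 : HasDerivAt (fun x : ℝ => a + x) 1 x := (hasDerivAt_id x).const_add a
        have := (Real.hasDerivAt_log hax.ne').comp x h3
        rw [mul_one] at this
        exact this
      exact h1.sub h2
    apply monotoneOn_of_deriv_nonneg (convex_Ioc 0 N)
    · exact fun x hx => ((hderiv x hx).continuousAt).continuousWithinAt
    · intro x hx
      rw [interior_Ioc] at hx
      exact ((hderiv x ⟨hx.1, hx.2.le⟩).differentiableAt).differentiableWithinAt
    · intro x hx
      rw [interior_Ioc] at hx
      obtain ⟨hx0, hxN⟩ := hx
      have hax : 0 < a + x := by linarith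
      rw [(hderiv x ⟨hx0, hxN.le⟩).deriv]
      have e1 : lam * x⁻¹ = N / ((N+a)*x) := by rw [hlam]; field_simp
      have e2 : (a+x)⁻¹ = 1/(a+x) := by rw [inv_eq_one_div]
      rw [sub_nonneg, e1, e2, div_le_div_iff₀ hax (by positivity)]
      nlinarith
  have hFle := hF ⟨hv, hvN⟩ ⟨hu, huN⟩ hvu
  simp only at hFle
  have hgu : 0 < gv a u := gv_pos ha hu.le
  have hgv : 0 < gv a v := gv_pos ha hv.le
  have hau : 0 < a + u := by linarith
  have hav : 0 < a + v := by linarith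
  have hmono : gv a u ≤ gv a v := by
    rw [gv, gv]
    apply div_le_div_of_nonneg_left ha.le (by linarith) (by linarith)
  have h1 : Real.log (gv a u) ≤ Real.log (gv a v) := Real.log_le_log hgu hmono
  have h2 : Real.log v ≤ Real.log u := Real.log_le_log hv hvu
  have hlu : Real.log (gv a u) = Real.log a - Real.log (a + u) := by
    rw [gv, Real.log_div ha.ne' hau.ne']
  have hlv : Real.log (gv a v) = Real.log a - Real.log (a + v) := by
    rw [gv, Real.log_div ha.ne' hav.ne']
  rw [abs_of_nonpos (by linarith), abs_of_nonneg (by linarith), neg_sub, hlu, hlv]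
  have hgoal : Real.log (a+u) - Real.log (a+v) ≤ lam * (Real.log u - Real.log v) := by
    linarith
  linarith [hgoal]

lemma fv_iter_pos (hb : 1 ≤ b) (hc0 : 0 ≤ c) (n : ℕ) {v : ℝ} (hv : 0 < v) :
    0 < (fv b c)^[n] v := by
  induction n with
  | zero => simpa
  | succ n ih => rw [Function.iterate_succ_apply']; exact fv_pos hb hc0 ih

lemma abs_log_le_imp {x y B : ℝ} (hx : 0 < x) (hy : 0 < y)
    (h : |Real.log x - Real.log y| ≤ B) : x ≤ y * Real.exp B := by
  have h1 : Real.log x ≤ Real.log y + B := by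
    have := abs_le.mp h; linarith [this.2]
  calc x = Real.exp (Real.log x) := (Real.exp_log hx).symm
    _ ≤ Real.exp (Real.log y + B) := Real.exp_le_exp.mpr h1
    _ = y * Real.exp B := by rw [Real.exp_add, Real.exp_log hy]

def foldV (a b c : ℝ) (w : List Bool) (v : ℝ) : ℝ :=
  w.foldr (fun s z => if s then fv b c z else gv a z) v

lemma foldV_nil (v : ℝ) : foldV a b c [] v = v := rfl

lemma foldV_cons (s : Bool) (w : List Bool) (v : ℝ) :
    foldV a b c (s :: w) v = if s then fv b c (foldV a b c w v) else gv a (foldV a b c w v) := rfl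

lemma foldV_append (l₁ l₂ : List Bool) (v : ℝ) :
    foldV a b c (l₁ ++ l₂) v = foldV a b c l₁ (foldV a b c l₂ v) := by
  simp [foldV, List.foldr_append]

lemma foldV_pos (ha : 0 < a) (hb : 1 ≤ b) (hc0 : 0 ≤ c) (w : List Bool) {v : ℝ} (hv : 0 < v) :
    0 < foldV a b c w v := by
  induction w with
  | nil => simpa [foldV_nil]
  | cons s w ih =>
      rw [foldV_cons]
      cases s
      · simpa using gv_pos ha (le_of_lt ih)
      · simpa using fv_pos hb hc0 ih

lemma foldV_replicate (n : ℕ) (v : ℝ) :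
    foldV a b c (List.replicate n true) v = (fv b c)^[n] v := by
  induction n with
  | zero => rfl
  | succ n ih =>
      rw [List.replicate_succ, foldV_cons, ih, Function.iterate_succ_apply']
      simp

lemma foldV_block (n : ℕ) (v : ℝ) :
    foldV a b c (List.replicate n true ++ [false]) v = (fv b c)^[n] (gv a v) := by
  rw [foldV_append, foldV_replicate]
  rfl

def word (a b c : ℝ) : ℝ → ℕ → List Bool
  | _, 0 => []
  | s, k+1 => (List.replicate (mm b c s) true ++ [false]) ++ word a b c (step a b c s) k

lemma foldV_word_succ (s v : ℝ) (k : ℕ) :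
    foldV a b c (word a b c s (k+1)) v
      = (fv b c)^[mm b c s] (gv a (foldV a b c (word a b c (step a b c s) k) v)) := by
  rw [word, foldV_append, foldV_block]

/-- the two-step contraction -/
lemma two_step (ha : 0 < a) (hb : 1 ≤ b) (hc0 : 0 ≤ c) (hc1 : c < 1) (hd : 0 < b - 1 + c)
    {B : ℝ} (hB : 0 ≤ B) {s p : ℝ} (hs : 0 < s) (hp : 0 < p)
    (hdist : |Real.log p - Real.log (step a b c (step a b c s))| ≤ B) :
    |Real.log ((fv b c)^[mm b c s] (gv a ((fv b c)^[mm b c (step a b c s)] (gv a p))))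
        - Real.log s|
      ≤ (max 1 (a*b/(1-c)) * Real.exp B / (max 1 (a*b/(1-c)) * Real.exp B + a))
          * |Real.log p - Real.log (step a b c (step a b c s))| := by
  set M := max 1 (a*b/(1-c)) with hM
  set N := M * Real.exp B with hN
  have hM1 : (1:ℝ) ≤ M := le_max_left _ _
  have hexp1 : (1:ℝ) ≤ Real.exp B := by
    rw [← Real.exp_zero]; exact Real.exp_le_exp.mpr hB
  have hN0 : 0 < N := by
    rw [hN]; positivity
  have hMN : M ≤ N := by
    rw [hN]; nlinarith
  set lam := N / (N + a) with hlam
  set s1 := step a b c s with hs1def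
  set s2 := step a b c s1 with hs2def
  have hs1 : 0 < s1 := step_pos ha hb hc0 hc1 hd hs
  have hs2 : 0 < s2 := step_pos ha hb hc0 hc1 hd hs1
  set q := (fv b c)^[mm b c s1] (gv a p) with hq
  have hgp : 0 < gv a p := gv_pos ha hp.le
  have hq0 : 0 < q := fv_iter_pos hb hc0 _ hgp
  have hphi1 : (fv b c)^[mm b c s1] (gv a s2) = s1 := phi_eq ha hb hc0 hc1 hd hs1
  have hphi0 : (fv b c)^[mm b c s] (gv a s1) = s := phi_eq ha hb hc0 hc1 hd hs
  have hgs2 : 0 < gv a s2 := gv_pos ha hs2.le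
  have hgs1 : 0 < gv a s1 := gv_pos ha hs1.le
  have hgq : 0 < gv a q := gv_pos ha hq0.le
  -- inner 1-Lipschitz estimate
  have hq_d : |Real.log q - Real.log s1| ≤ |Real.log p - Real.log s2| := by
    calc |Real.log q - Real.log s1|
        = |Real.log ((fv b c)^[mm b c s1] (gv a p))
            - Real.log ((fv b c)^[mm b c s1] (gv a s2))| := by rw [hphi1]
      _ ≤ |Real.log (gv a p) - Real.log (gv a s2)| := lip_fv_iter hb hc0 _ hgp hgs2
      _ ≤ |Real.log p - Real.log s2| := lip_gv ha hp hs2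
  by_cases hcase : s1 ≤ M
  · -- good at outer g
    have hqN : q ≤ N := by
      have := abs_log_le_imp hq0 hs1 (le_trans hq_d hdist)
      calc q ≤ s1 * Real.exp B := this
        _ ≤ M * Real.exp B := by nlinarith [Real.exp_pos B]
    have hs1N : s1 ≤ N := le_trans hcase hMN
    calc |Real.log ((fv b c)^[mm b c s] (gv a q)) - Real.log s|
        = |Real.log ((fv b c)^[mm b c s] (gv a q))
            - Real.log ((fv b c)^[mm b c s] (gv a s1))| := by rw [hphi0]
      _ ≤ |Real.log (gv a q) - Real.log (gv a s1)| := lip_fv_iter hb hc0 _ hgq hgs1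
      _ ≤ lam * |Real.log q - Real.log s1| := lip_gv_strong ha hN0 hq0 hqN hs1 hs1N
      _ ≤ lam * |Real.log p - Real.log s2| := by
          apply mul_le_mul_of_nonneg_left hq_d
          rw [hlam]; positivity
  · -- s1 > M hence s2 ≤ M : good at inner g
    push_neg at hcase
    have hs1_ge : (1:ℝ) ≤ s1 := le_trans hM1 hcase.le
    have hs2M : s2 ≤ M := step_le ha hb hc0 hc1 hd hs1_ge
    have hs2N : s2 ≤ N := le_trans hs2M hMN
    have hpN : p ≤ N := by
      have := abs_log_le_imp hp hs2 hdist
      calc p ≤ s2 * Real.exp B := this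
        _ ≤ M * Real.exp B := by nlinarith [Real.exp_pos B]
    have hq_d' : |Real.log q - Real.log s1| ≤ lam * |Real.log p - Real.log s2| := by
      calc |Real.log q - Real.log s1|
          = |Real.log ((fv b c)^[mm b c s1] (gv a p))
              - Real.log ((fv b c)^[mm b c s1] (gv a s2))| := by rw [hphi1]
        _ ≤ |Real.log (gv a p) - Real.log (gv a s2)| := lip_fv_iter hb hc0 _ hgp hgs2
        _ ≤ lam * |Real.log p - Real.log s2| := lip_gv_strong ha hN0 hp hpN hs2 hs2N
    calc |Real.log ((fv b c)^[mm b c s] (gv a q)) - Real.log s|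
        = |Real.log ((fv b c)^[mm b c s] (gv a q))
            - Real.log ((fv b c)^[mm b c s] (gv a s1))| := by rw [hphi0]
      _ ≤ |Real.log (gv a q) - Real.log (gv a s1)| := lip_fv_iter hb hc0 _ hgq hgs1
      _ ≤ |Real.log q - Real.log s1| := lip_gv ha hq0 hs1
      _ ≤ lam * |Real.log p - Real.log s2| := hq_d'

lemma step_iter_pos (ha : 0 < a) (hb : 1 ≤ b) (hc0 : 0 ≤ c) (hc1 : c < 1)
    (hd : 0 < b - 1 + c) (n : ℕ) {s : ℝ} (hs : 0 < s) : 0 < (step a b c)^[n] s := by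
  induction n with
  | zero => simpa
  | succ n ih => rw [Function.iterate_succ_apply']; exact step_pos ha hb hc0 hc1 hd ih

lemma main_contr (ha : 0 < a) (hb : 1 ≤ b) (hc0 : 0 ≤ c) (hc1 : c < 1) (hd : 0 < b - 1 + c)
    {B : ℝ} (hB : 0 ≤ B) :
    ∀ (j : ℕ) (s : ℝ), 0 < s → ∀ (v : ℝ), 0 < v →
      |Real.log v - Real.log ((step a b c)^[2*j] s)| ≤ B →
      |Real.log (foldV a b c (word a b c s (2*j)) v) - Real.log s|
        ≤ (max 1 (a*b/(1-c)) * Real.exp B / (max 1 (a*b/(1-c)) * Real.exp B + a))^j * B := by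
  set M := max 1 (a*b/(1-c)) with hM
  set N := M * Real.exp B with hN
  set lam := N / (N + a) with hlam
  have hM1 : (1:ℝ) ≤ M := le_max_left _ _
  have hexp1 : (1:ℝ) ≤ Real.exp B := by
    rw [← Real.exp_zero]; exact Real.exp_le_exp.mpr hB
  have hN0 : 0 < N := by rw [hN]; positivity
  have hlam0 : 0 ≤ lam := by rw [hlam]; positivity
  have hlam1 : lam ≤ 1 := by
    rw [hlam, div_le_one (by linarith)]; linarith
  intro j
  induction j with
  | zero =>
      intro s hs v hv h
      simpa [word, foldV_nil] using h
  | succ j ih =>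
      intro s hs v hv h
      have h2 : 2 * (j+1) = (2*j) + 1 + 1 := by ring
      rw [h2] at h ⊢
      set s1 := step a b c s with hs1def
      set s2 := step a b c s1 with hs2def
      have hs1 : 0 < s1 := step_pos ha hb hc0 hc1 hd hs
      have hs2 : 0 < s2 := step_pos ha hb hc0 hc1 hd hs1
      have hiter : (step a b c)^[2*j + 1 + 1] s = (step a b c)^[2*j] s2 := by
        rw [hs2def, hs1def]
        rw [Function.iterate_add_apply (step a b c) (2*j) 2 s]
        rfl
      rw [hiter] at h
      set p := foldV a b c (word a b c s2 (2*j)) v with hp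
      have hp0 : 0 < p := foldV_pos ha hb hc0 _ hv
      have hIH := ih s2 hs2 v hv h
      have hIHB : |Real.log p - Real.log s2| ≤ B := by
        have hpow : lam ^ j ≤ 1 := pow_le_one₀ hlam0 hlam1
        calc |Real.log p - Real.log s2| ≤ lam ^ j * B := hIH
          _ ≤ 1 * B := by nlinarith
          _ = B := one_mul B
      have hts := two_step ha hb hc0 hc1 hd hB hs hp0 hIHB
      have hfold : foldV a b c (word a b c s (2*j+1+1)) v
          = (fv b c)^[mm b c s] (gv a ((fv b c)^[mm b c s1] (gv a p))) := by
        rw [foldV_word_succ, foldV_word_succ]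
      rw [hfold]
      calc |Real.log ((fv b c)^[mm b c s] (gv a ((fv b c)^[mm b c s1] (gv a p))))
            - Real.log s|
          ≤ lam * |Real.log p - Real.log s2| := hts
        _ ≤ lam * (lam ^ j * B) := mul_le_mul_of_nonneg_left hIH hlam0
        _ = lam ^ (j+1) * B := by ring

lemma anchor (ha : 0 < a) (hb : 1 ≤ b) (hc0 : 0 ≤ c) (hc1 : c < 1) (hd : 0 < b - 1 + c)
    {x : ℝ} (hx : 0 ≤ x) {τ : ℝ} (ht : 0 < τ) :
    ∃ l : List Bool, l ≠ [] ∧ 0 < foldV a b c l x ∧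
      |Real.log (foldV a b c l x) - Real.log τ|
        ≤ max (Real.log (b + c / gv a x)) (Real.log ((1+a)/a)) := by
  set w0 := gv a x with hw0def
  have hw0 : 0 < w0 := gv_pos ha hx
  have hw01 : w0 ≤ 1 := gv_le_one ha hx
  set ρ := b + c / w0 with hρdef
  have hρ1 : (1:ℝ) ≤ ρ := by
    have : 0 ≤ c / w0 := by positivity
    rw [hρdef]; linarith
  set W : ℕ → ℝ := fun n => (fv b c)^[n] (gv a x) with hWdef
  have hWpos : ∀ n, 0 < W n := fun n => fv_iter_pos hb hc0 n hw0
  have hWfold : ∀ n, foldV a b c (List.replicate n true ++ [false]) x = W n :=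
    fun n => foldV_block n x
  have hWsucc : ∀ n, W (n+1) = b * W n + c := by
    intro n
    show (fv b c)^[n+1] (gv a x) = _
    rw [Function.iterate_succ_apply']
    rfl
  have hWmono : ∀ n, w0 ≤ W n := by
    intro n
    induction n with
    | zero => exact le_refl _
    | succ n ih =>
        have := fv_ge hb hc0 (hWpos n).le
        rw [hWsucc n]
        calc w0 ≤ W n := ih
          _ ≤ b * W n + c := this
  have hdelta : 0 < (b-1) * w0 + c := by
    rcases lt_or_eq_of_le hc0 with h | h
    · nlinarith
    · have hb1 : 0 < b - 1 := by rw [← h] at hd; linarith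
      nlinarith
  have hWgrow : ∀ n, w0 + n * ((b-1) * w0 + c) ≤ W n := by
    intro n
    induction n with
    | zero =>
        have h0 : W 0 = w0 := rfl
        rw [h0]; norm_num
    | succ n ih =>
        rw [hWsucc n]
        have h1 : (b-1) * w0 ≤ (b-1) * W n :=
          mul_le_mul_of_nonneg_left (hWmono n) (by linarith)
        push_cast
        nlinarith
  have hWub : ∀ T : ℝ, ∃ n, T < W n := by
    intro T
    obtain ⟨n, hn⟩ := exists_nat_gt ((T - w0) / ((b-1) * w0 + c))
    refine ⟨n, ?_⟩
    have h1 : T - w0 < n * ((b-1) * w0 + c) := by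
      rw [div_lt_iff₀ hdelta] at hn; linarith
    have := hWgrow n
    linarith
  have hWratio : ∀ n, W (n+1) ≤ ρ * W n := by
    intro n
    rw [hWsucc n, hρdef]
    have h1 : c ≤ c / w0 * W n := by
      have h2 : c / w0 * w0 ≤ c / w0 * W n := by
        apply mul_le_mul_of_nonneg_left (hWmono n) (by positivity)
      rw [div_mul_cancel₀ c hw0.ne'] at h2
      exact h2
    nlinarith [h1]
  have hlogratio : ∀ n, Real.log (W (n+1)) - Real.log (W n) ≤ Real.log ρ := by
    intro n
    have h1 : Real.log (W (n+1)) ≤ Real.log (ρ * W n) :=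
      Real.log_le_log (hWpos (n+1)) (hWratio n)
    rw [Real.log_mul (by linarith) (hWpos n).ne'] at h1
    linarith
  by_cases hcase1 : w0 ≤ τ
  · -- use W points
    have hex := hWub τ
    have hKspec : τ < W (Nat.find hex) := Nat.find_spec hex
    have hK0 : Nat.find hex ≠ 0 := by
      intro h0
      rw [h0] at hKspec
      have hW0 : W 0 = w0 := rfl
      rw [hW0] at hKspec; linarith
    obtain ⟨n, hn⟩ := Nat.exists_eq_succ_of_ne_zero hK0
    have hmin : ¬ τ < W n := Nat.find_min hex (by omega)
    push_neg at hmin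
    refine ⟨List.replicate n true ++ [false], by simp, ?_, ?_⟩
    · rw [hWfold n]; exact hWpos n
    · rw [hWfold n]
      have h1 : Real.log (W n) ≤ Real.log τ := Real.log_le_log (hWpos n) hmin
      have h2 : Real.log τ ≤ Real.log (W (n+1)) := by
        apply Real.log_le_log ht
        rw [hn] at hKspec
        exact hKspec.le
      rw [abs_sub_comm, abs_of_nonneg (by linarith)]
      calc Real.log τ - Real.log (W n) ≤ Real.log (W (n+1)) - Real.log (W n) := by linarith
        _ ≤ Real.log ρ := hlogratio n
        _ ≤ _ := le_max_left _ _
  · push_neg at hcase1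
    by_cases hcase2 : gv a w0 < τ
    · -- middle zone : use w0 itself
      refine ⟨[false], by simp, ?_, ?_⟩
      · exact hw0
      · show |Real.log w0 - Real.log τ| ≤ _
        have hgw0 : 0 < gv a w0 := gv_pos ha hw0.le
        have h1 : Real.log τ ≤ Real.log w0 := Real.log_le_log ht hcase1.le
        have h2 : Real.log (gv a w0) ≤ Real.log τ := Real.log_le_log hgw0 hcase2.le
        have haw0 : (0:ℝ) < a + w0 := by linarith
        have e1 : Real.log (gv a w0) = Real.log a - Real.log (a + w0) := by
          rw [gv, Real.log_div ha.ne' haw0.ne']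
        have e2 : Real.log w0 + Real.log (a + w0) = Real.log (w0 * (a+w0)) :=
          (Real.log_mul hw0.ne' haw0.ne').symm
        have e3 : Real.log (w0 * (a+w0)) - Real.log a = Real.log (w0 * (a+w0) / a) :=
          (Real.log_div (by positivity) ha.ne').symm
        have e4 : Real.log (w0 * (a+w0) / a) ≤ Real.log ((1+a)/a) := by
          apply Real.log_le_log (by positivity)
          rw [div_le_div_iff₀ ha ha]
          have h6 : w0 * (a+w0) ≤ 1 * (a + w0) := mul_le_mul_of_nonneg_right hw01 haw0.le
          nlinarith [h6]
        rw [abs_of_nonneg (by linarith)]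
        have : Real.log w0 - Real.log τ ≤ Real.log ((1+a)/a) := by linarith
        exact le_trans this (le_max_right _ _)
    · push_neg at hcase2
      set Z : ℕ → ℝ := fun n => gv a (W n) with hZdef
      have hZpos : ∀ n, 0 < Z n := fun n => gv_pos ha (hWpos n).le
      have hex : ∃ n, Z n < τ := by
        obtain ⟨n, hn⟩ := hWub (a / τ - a)
        refine ⟨n, ?_⟩
        show gv a (W n) < τ
        rw [gv, div_lt_iff₀ (by linarith [hWpos n])]
        have h5 : a / τ < a + W n := by linarith
        calc a = τ * (a/τ) := by field_simp
          _ < τ * (a + W n) := by apply mul_lt_mul_of_pos_left h5 ht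
      have hKspec : Z (Nat.find hex) < τ := Nat.find_spec hex
      have hK0 : Nat.find hex ≠ 0 := by
        intro h0
        rw [h0] at hKspec
        have hZ0 : Z 0 = gv a w0 := rfl
        rw [hZ0] at hKspec; linarith
      obtain ⟨n, hn⟩ := Nat.exists_eq_succ_of_ne_zero hK0
      have hmin : ¬ Z n < τ := Nat.find_min hex (by omega)
      push_neg at hmin
      have hfoldZ : foldV a b c (false :: (List.replicate n true ++ [false])) x
          = gv a (W n) := by
        rw [foldV_cons, hWfold n]
        simp
      refine ⟨false :: (List.replicate n true ++ [false]), by simp, ?_, ?_⟩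
      · rw [hfoldZ]
        exact hZpos n
      · rw [hfoldZ]
        have h1 : Real.log τ ≤ Real.log (Z n) := Real.log_le_log ht hmin
        have h2 : Real.log (Z (n+1)) ≤ Real.log τ := by
          apply Real.log_le_log (hZpos (n+1))
          rw [hn] at hKspec
          exact hKspec.le
        have hawn : (0:ℝ) < a + W n := by linarith [hWpos n]
        have hawn1 : (0:ℝ) < a + W (n+1) := by linarith [hWpos (n+1)]
        have e1 : Real.log (Z n) = Real.log a - Real.log (a + W n) := by
          show Real.log (gv a (W n)) = _
          rw [gv, Real.log_div ha.ne' hawn.ne']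
        have e2 : Real.log (Z (n+1)) = Real.log a - Real.log (a + W (n+1)) := by
          show Real.log (gv a (W (n+1))) = _
          rw [gv, Real.log_div ha.ne' hawn1.ne']
        have hZratio : a + W (n+1) ≤ ρ * (a + W n) := by
          have := hWratio n
          nlinarith [hρ1, ha]
        have h3 : Real.log (a + W (n+1)) ≤ Real.log ρ + Real.log (a + W n) := by
          have := Real.log_le_log hawn1 hZratio
          rw [Real.log_mul (by linarith) hawn.ne'] at this
          linarith
        show |Real.log (gv a (W n)) - Real.log τ| ≤ _
        have hZn : gv a (W n) = Z n := rfl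
        rw [hZn, abs_of_nonneg (by linarith)]
        have : Real.log (Z n) - Real.log τ ≤ Real.log ρ := by linarith
        exact le_trans this (le_max_left _ _)

lemma foldV_nonneg (ha : 0 < a) (hb : 1 ≤ b) (hc0 : 0 ≤ c) (w : List Bool) {v : ℝ}
    (hv : 0 ≤ v) : 0 ≤ foldV a b c w v := by
  induction w with
  | nil => simpa [foldV_nil]
  | cons s w ih =>
      rw [foldV_cons]
      cases s
      · simpa using (gv_pos ha ih).le
      · simp only [if_pos]
        have : v ≤ 1 ∨ True := Or.inr trivial
        simp only [fv]
        nlinarith [ih, hb, hc0]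

lemma conj (ha : 0 < a) (hb : 1 ≤ b) (hc0 : 0 ≤ c) {R T : ℝ → ℝ}
    (hR : ∀ x : ℝ, R x = a * x / ((-(a * b) + a + c) * x + a * b))
    (hT : ∀ x : ℝ, T x = a / (x + a)) :
    ∀ (l : List Bool) (v : ℝ), 0 ≤ v →
      l.foldr (fun s z => if s then R z else T z) (a/(a+v)) = a/(a + foldV a b c l v) := by
  intro l
  induction l with
  | nil => intro v hv; rfl
  | cons s l ih =>
      intro v hv
      have hV : 0 ≤ foldV a b c l v := foldV_nonneg ha hb hc0 l hv
      set V := foldV a b c l v with hVdef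
      have haV : 0 < a + V := by linarith
      have hfold : (s :: l).foldr (fun s z => if s then R z else T z) (a/(a+v))
          = (if s then R (a/(a+V)) else T (a/(a+V))) := by
        simp only [List.foldr_cons, ih v hv]
        rfl
      rw [hfold, foldV_cons]
      cases s
      · -- T case
        simp only [Bool.false_eq_true, if_false]
        rw [hT, gv]
        rw [add_comm (a/(a+V)) a]
      · -- R case
        simp only [if_true]
        rw [hR, fv]
        have hden2 : 0 < a + (b * V + c) := by nlinarith
        have hden : (-(a * b) + a + c) * (a/(a+V)) + a * b = a * (a + (b * V + c)) / (a+V) := by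
          field_simp
          ring
        rw [hden, ← hVdef]
        rw [div_eq_div_iff (by positivity) hden2.ne']
        field_simp

lemma squeeze {u t eta : ℝ} (hu0 : 0 < u) (ht : 0 < t) (heta : 0 < eta) (h12 : eta ≤ 1/2)
    (hub : u ≤ t*(1+2*eta)) (htb : t ≤ u*(1+2*eta)) : |u - t| ≤ 4*t*eta := by
  rw [abs_le]
  constructor
  · have hut2 : u ≤ 2*t := by nlinarith
    nlinarith
  · nlinarith

lemma squeeze2 {a u t eta eps : ℝ} (ha : 0 < a) (ht : 0 < t) (heps : 0 < eps)
    (heta : eta ≤ a*eps/(4*(t+1))) (h : |u - t| ≤ 4*t*eta) : |u - t| < a * eps := by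
  have h5 : 4*t*eta ≤ 4*t*(a*eps/(4*(t+1))) := by
    apply mul_le_mul_of_nonneg_left heta (by linarith)
  have h6 : 4*t*(a*eps/(4*(t+1))) < a*eps := by
    have e : 4*t*(a*eps/(4*(t+1))) = a*eps*t/(t+1) := by
      field_simp
    rw [e, div_lt_iff₀ (by linarith : (0:ℝ) < t+1)]
    nlinarith
  linarith

lemma final_dist {a u t eps : ℝ} (ha : 0 < a) (hu0 : 0 < u) (ht : 0 < t)
    (h : |u - t| < a * eps) : |a/(a+t) - a/(a+u)| < eps := by
  have hau : 0 < a + u := by linarith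
  have hat : 0 < a + t := by linarith
  have heps : 0 < eps := by
    have := abs_nonneg (u - t)
    nlinarith
  have he : a/(a+t) - a/(a+u) = a*(u-t)/((a+t)*(a+u)) := by
    field_simp
    ring
  rw [he, abs_div, abs_mul, abs_of_pos ha, abs_of_pos (mul_pos hat hau)]
  have h7 : a * |u-t| / ((a+t)*(a+u)) ≤ |u-t| / a := by
    rw [div_le_div_iff₀ (mul_pos hat hau) ha]
    have h9 : a*a ≤ (a+t)*(a+u) := by nlinarith
    nlinarith [abs_nonneg (u-t)]
  have h8 : |u-t| / a < eps := by
    rw [div_lt_iff₀ ha]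
    linarith
  linarith

end

end Stmt12

/-- density of orbits for R(x) = ax/((−ab+a+c)x+ab) and
T(x) = a/(x+a), with b ≥ 1 > c ≥ 0, a > 0, and b > 1 if c = 0. -/
theorem stmt_12 (a b c : ℝ) (ha : 0 < a) (hb : 1 ≤ b) (hc1 : c < 1) (hc0 : 0 ≤ c)
    (hbc : c = 0 → 1 < b)
    (R T : ℝ → ℝ)
    (hR : ∀ x : ℝ, R x = a * x / ((-(a * b) + a + c) * x + a * b))
    (hT : ∀ x : ℝ, T x = a / (x + a)) :
    ∀ x ∈ Set.Icc (0:ℝ) 1, Set.Icc (0:ℝ) 1 ⊆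
      closure {y | ∃ w : List Bool, w ≠ [] ∧
        y = w.foldr (fun s z => if s then R z else T z) x} := by
  intro x hx y hy
  have hx0 : 0 ≤ x := hx.1
  have hd : 0 < b - 1 + c := by
    rcases eq_or_lt_of_le hc0 with h | h
    · have := hbc h.symm; linarith
    · linarith
  rw [Metric.mem_closure_iff]
  intro ε hε
  set B := max (Real.log (b + c / Stmt12.gv a x)) (Real.log ((1+a)/a)) with hBdef
  have hB : 0 ≤ B := by
    refine le_trans (Real.log_nonneg ?_) (le_max_right _ _)
    rw [le_div_iff₀ ha]; linarith
  have hexpB : (0:ℝ) < Real.exp B := Real.exp_pos B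
  have hfoldX : ∀ l : List Bool,
      (l ++ [false]).foldr (fun s z => if s then R z else T z) x
        = a / (a + Stmt12.foldV a b c l x) := by
    intro l
    rw [List.foldr_append]
    have h1 : ([false] : List Bool).foldr (fun s z => if s then R z else T z) x
        = a/(a+x) := by
      show (if false = true then R x else T x) = a/(a+x)
      simp only [Bool.false_eq_true, if_false]
      rw [hT, add_comm]
    rw [h1]
    exact Stmt12.conj ha hb hc0 hR hT l x hx0
  by_cases hy1 : y = 1
  · -- target 1 : need small orbit point in v space
    have hτ : 0 < a*ε/(2*Real.exp B) := by positivity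
    obtain ⟨l, hlne, hlpos, hla⟩ := Stmt12.anchor ha hb hc0 hc1 hd hx0 hτ
    set u := Stmt12.foldV a b c l x with hudef
    have hu_le : u ≤ (a*ε/(2*Real.exp B)) * Real.exp B := Stmt12.abs_log_le_imp hlpos hτ hla
    have hu2 : u ≤ a*ε/2 := by
      have : (a*ε/(2*Real.exp B)) * Real.exp B = a*ε/2 := by
        field_simp
      linarith [hu_le, this.le]
    refine ⟨a/(a+u), ⟨l ++ [false], by simp, (hfoldX l).symm⟩, ?_⟩
    rw [Real.dist_eq, hy1]
    have hau : 0 < a + u := by linarith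
    have he : 1 - a/(a+u) = u/(a+u) := by field_simp; ring
    rw [he, abs_of_nonneg (by positivity)]
    have h3 : u/(a+u) ≤ u/a := by
      apply div_le_div_of_nonneg_left hlpos.le ha (by linarith)
    have h4 : u/a ≤ ε/2 := by
      rw [div_le_div_iff₀ ha (by norm_num : (0:ℝ) < 2)]
      linarith [hu2]
    linarith
  · by_cases hy0 : y = 0
    · -- target 0 : need large orbit point in v space
      have hτ : 0 < (a/ε + 1) * Real.exp B := by positivity
      obtain ⟨l, hlne, hlpos, hla⟩ := Stmt12.anchor ha hb hc0 hc1 hd hx0 hτ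
      set u := Stmt12.foldV a b c l x with hudef
      have hτu : (a/ε + 1) * Real.exp B ≤ u * Real.exp B := by
        rw [abs_sub_comm] at hla
        exact Stmt12.abs_log_le_imp hτ hlpos hla
      have hu_ge : a/ε + 1 ≤ u := le_of_mul_le_mul_right hτu hexpB
      have hu0 : 0 < u := hlpos
      refine ⟨a/(a+u), ⟨l ++ [false], by simp, (hfoldX l).symm⟩, ?_⟩
      rw [Real.dist_eq, hy0]
      have hau : 0 < a + u := by linarith
      rw [zero_sub, abs_neg, abs_of_nonneg (by positivity)]
      have h3 : a/(a+u) ≤ a/u := by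
        apply div_le_div_of_nonneg_left ha.le hu0 (by linarith)
      have h4 : a/u < ε := by
        rw [div_lt_iff₀ hu0]
        have h5 : ε * (a/ε + 1) ≤ ε * u := mul_le_mul_of_nonneg_left hu_ge hε.le
        have h6 : ε * (a/ε + 1) = a + ε := by field_simp
        linarith
      linarith
    · -- main case : 0 < y < 1
      have hy0' : 0 < y := lt_of_le_of_ne hy.1 (Ne.symm hy0)
      have hy1' : y < 1 := lt_of_le_of_ne hy.2 hy1
      set t := a/y - a with htdef
      have ht : 0 < t := by
        rw [htdef, sub_pos, lt_div_iff₀ hy0']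
        nlinarith
      have hyt : a/(a+t) = y := by
        rw [htdef]
        have : a + (a/y - a) = a/y := by ring
        rw [this, div_div_eq_mul_div, mul_comm, mul_div_assoc, div_self ha.ne', mul_one]
      set N := max 1 (a*b/(1-c)) * Real.exp B with hNdef
      have hN0 : 0 < N := by
        have : (0:ℝ) < max 1 (a*b/(1-c)) := lt_of_lt_of_le one_pos (le_max_left _ _)
        rw [hNdef]; positivity
      set lam := N / (N + a) with hlamdef
      have hlam0 : 0 ≤ lam := by rw [hlamdef]; positivity
      have hlam1 : lam < 1 := by
        rw [hlamdef, div_lt_one (by linarith)]; linarith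
      set η := min (1/2 : ℝ) (a*ε/(4*(t+1))) with hηdef
      have hη : 0 < η := by
        rw [hηdef]
        apply lt_min (by norm_num)
        positivity
      have hη12 : η ≤ 1/2 := min_le_left _ _
      obtain ⟨j, hj⟩ := exists_pow_lt_of_lt_one (show 0 < η/(B+1) by positivity) hlam1
      have hjB : lam ^ j * B < η := by
        have h2 := mul_lt_mul_of_pos_right hj (show (0:ℝ) < B+1 by linarith)
        rw [div_mul_cancel₀ η (by linarith : B + (1:ℝ) ≠ 0)] at h2
        have h3 : lam ^ j * B ≤ lam ^ j * (B+1) := by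
          apply mul_le_mul_of_nonneg_left (by linarith) (pow_nonneg hlam0 j)
        linarith
      set τ := (Stmt12.step a b c)^[2*j] t with hτdef
      have hτ : 0 < τ := Stmt12.step_iter_pos ha hb hc0 hc1 hd _ ht
      obtain ⟨l, hlne, hlpos, hla⟩ := Stmt12.anchor ha hb hc0 hc1 hd hx0 hτ
      have hmain := Stmt12.main_contr ha hb hc0 hc1 hd hB j t ht _ hlpos hla
      set u := Stmt12.foldV a b c (Stmt12.word a b c t (2*j)) (Stmt12.foldV a b c l x)
        with hudef
      have hu0 : 0 < u := Stmt12.foldV_pos ha hb hc0 _ hlpos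
      have hfold2 : Stmt12.foldV a b c (Stmt12.word a b c t (2*j) ++ l) x = u := by
        rw [Stmt12.foldV_append, hudef]
      have hut : |Real.log u - Real.log t| ≤ η := by
        have : (max 1 (a*b/(1-c)) * Real.exp B / (max 1 (a*b/(1-c)) * Real.exp B + a)) ^ j
            = lam ^ j := by rw [hlamdef, hNdef]
        rw [hudef]
        calc |Real.log (Stmt12.foldV a b c (Stmt12.word a b c t (2*j))
                (Stmt12.foldV a b c l x)) - Real.log t|
            ≤ (max 1 (a*b/(1-c)) * Real.exp B
                / (max 1 (a*b/(1-c)) * Real.exp B + a)) ^ j * B := hmain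
          _ = lam ^ j * B := by rw [this]
          _ ≤ η := hjB.le
      clear_value u
      clear_value τ
      -- convert log estimate to euclidean
      have hexpeta : Real.exp η * (1 - η) ≤ 1 := by
        have h1 : 1 - η ≤ Real.exp (-η) := by
          have := Real.add_one_le_exp (-η); linarith
        have h2 : Real.exp η * (1 - η) ≤ Real.exp η * Real.exp (-η) :=
          mul_le_mul_of_nonneg_left h1 (Real.exp_pos η).le
        rw [← Real.exp_add] at h2
        simpa using h2
      have hexp2 : Real.exp η ≤ 1 + 2*η := by
        nlinarith [hexpeta, Real.exp_pos η]
      have hule : u ≤ t * Real.exp η := Stmt12.abs_log_le_imp hu0 ht hut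
      have htle : t ≤ u * Real.exp η := by
        rw [abs_sub_comm] at hut
        exact Stmt12.abs_log_le_imp ht hu0 hut
      have hub : u ≤ t * (1 + 2*η) := by
        calc u ≤ t * Real.exp η := hule
          _ ≤ t * (1 + 2*η) := mul_le_mul_of_nonneg_left hexp2 ht.le
      have htb : t ≤ u * (1 + 2*η) := by
        calc t ≤ u * Real.exp η := htle
          _ ≤ u * (1 + 2*η) := mul_le_mul_of_nonneg_left hexp2 hu0.le
      have hdiff : |u - t| ≤ 4*t*η := Stmt12.squeeze hu0 ht hη hη12 hub htb
      have hdiff2 : |u - t| < a * ε :=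
        Stmt12.squeeze2 ha ht hε (min_le_right _ _) hdiff
      -- final assembly
      refine ⟨a/(a+u), ⟨(Stmt12.word a b c t (2*j) ++ l) ++ [false], by simp, ?_⟩, ?_⟩
      · rw [hfoldX, hfold2]
      · rw [Real.dist_eq, ← hyt]
        exact Stmt12.final_dist ha hu0 ht hdiff2
end

section
/- Let g : [0,1] → [0,1] be a decreasing Möbius transformation that is onto. Then g is an involution: g(g(x)) = x for all x ∈ [0,1]. -/
/-- a decreasing onto Möbius self-map of [0,1] is an involution. -/
theorem stmt_14 (g : ℝ → ℝ) (A B C D : ℝ) (hdet : A * D - B * C ≠ 0)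
    (hden : ∀ x ∈ Set.Icc (0:ℝ) 1, C * x + D ≠ 0)
    (hg : ∀ x ∈ Set.Icc (0:ℝ) 1, g x = (A * x + B) / (C * x + D))
    (hganti : StrictAntiOn g (Set.Icc 0 1))
    (hgonto : g '' Set.Icc 0 1 = Set.Icc 0 1) :
    ∀ x ∈ Set.Icc (0:ℝ) 1, g (g x) = x := by
  have h0 : (0:ℝ) ∈ Set.Icc (0:ℝ) 1 := by norm_num
  have h1 : (1:ℝ) ∈ Set.Icc (0:ℝ) 1 := by norm_num
  have hg0mem : g 0 ∈ Set.Icc (0:ℝ) 1 := by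
    rw [← hgonto]; exact Set.mem_image_of_mem g h0
  have hg1mem : g 1 ∈ Set.Icc (0:ℝ) 1 := by
    rw [← hgonto]; exact Set.mem_image_of_mem g h1
  have hanti := hganti.antitoneOn
  have hg0 : g 0 = 1 := by
    have : (1:ℝ) ∈ g '' Set.Icc 0 1 := by rw [hgonto]; exact h1
    obtain ⟨x, hx, hgx⟩ := this
    have hle : g x ≤ g 0 := hanti h0 hx hx.1
    have := hg0mem.2
    linarith [hgx ▸ hle]
  have hg1 : g 1 = 0 := by
    have : (0:ℝ) ∈ g '' Set.Icc 0 1 := by rw [hgonto]; exact h0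
    obtain ⟨x, hx, hgx⟩ := this
    have hle : g 1 ≤ g x := hanti hx h1 hx.2
    have := hg1mem.1
    linarith [hgx ▸ hle]
  have hD : D ≠ 0 := by have := hden 0 h0; simpa using this
  have hCD : C + D ≠ 0 := by have := hden 1 h1; simpa using this
  have hB : B = D := by
    have := hg 0 h0
    rw [hg0] at this
    simp only [mul_zero, zero_mul, zero_add] at this
    field_simp at this
    linarith
  have hA : A = -D := by
    have := hg 1 h1
    rw [hg1] at this
    field_simp at this
    linarith
  subst hA hB
  intro x hx
  have hgxmem : g x ∈ Set.Icc (0:ℝ) 1 := by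
    rw [← hgonto]; exact Set.mem_image_of_mem g hx
  have hd1 := hden x hx
  have hd2 := hden (g x) hgxmem
  rw [hg x hx] at hd2
  rw [hg (g x) hgxmem, hg x hx]
  have hne : B * C + B ^ 2 ≠ 0 := fun hc => mul_ne_zero hD hCD (by nlinarith)
  field_simp
  have hden' : C * (-(B * x) + B) + B * (C * x + B) ≠ 0 := by
    intro h; exact hne (by linarith)
  have hd1' : x * C + B ≠ 0 := by rwa [mul_comm]
  have hd3 : (-x + 1) * C / (x * C + B) + 1 ≠ 0 := by
    rw [div_add_one hd1']; exact div_ne_zero (fun h => hCD (by linarith)) hd1'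
  rw [div_eq_iff hd3]; field_simp; ring
end

section
/- Let f, g : [0,1] → [0,1] be decreasing Möbius maps, neither onto, with Im(f) ∪ Im(g) = [0,1] and {o(f∘g), o(g∘f)} = {0,1} (attracting fixed points of the compositions). Then the orbit of every x ∈ (0,1) under the semigroup generated by f and g is dense in [0,1]. -/
open Set Filter

def IsMobiusOn (f : ℝ → ℝ) : Prop :=
  ∃ A B C D : ℝ, A * D - B * C ≠ 0 ∧
    ∀ x ∈ Set.Icc (0:ℝ) 1, C * x + D ≠ 0 ∧ f x = (A * x + B) / (C * x + D)

def IsAttractingFixedPt (f : ℝ → ℝ) (θ : ℝ) : Prop :=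
  θ ∈ Set.Icc (0:ℝ) 1 ∧ f θ = θ ∧ ∃ ε > 0, ∀ x ∈ Set.Icc (0:ℝ) 1, |x - θ| < ε →
    Filter.Tendsto (fun n => f^[n] x) Filter.atTop (nhds θ)

lemma mobius_contOn {f : ℝ → ℝ} (hf : IsMobiusOn f) : ContinuousOn f (Set.Icc 0 1) := by
  obtain ⟨A, B, C, D, hdet, hf⟩ := hf
  have : ContinuousOn (fun x => (A * x + B) / (C * x + D)) (Set.Icc 0 1) := by
    apply ContinuousOn.div
    · fun_prop
    · fun_prop
    · intro x hx; exact (hf x hx).1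
  exact this.congr (fun x hx => (hf x hx).2)

/-- surjectivity onto [f 1, f 0] via IVT -/
lemma anti_surj {f : ℝ → ℝ} (hf : ContinuousOn f (Set.Icc 0 1)) {t : ℝ}
    (ht : t ∈ Set.Icc (f 1) (f 0)) : ∃ z ∈ Set.Icc (0:ℝ) 1, f z = t := by
  have := intermediate_value_Icc' (by norm_num : (0:ℝ) ≤ 1) hf
  obtain ⟨z, hz, hfz⟩ := this ht
  exact ⟨z, hz, hfz⟩

lemma mobius_comp {f g : ℝ → ℝ} (hf : IsMobiusOn f) (hg : IsMobiusOn g)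
    (hgmaps : Set.MapsTo g (Set.Icc 0 1) (Set.Icc 0 1)) : IsMobiusOn (f ∘ g) := by
  obtain ⟨A₁, B₁, C₁, D₁, hdet₁, hf⟩ := hf
  obtain ⟨A₂, B₂, C₂, D₂, hdet₂, hg⟩ := hg
  refine ⟨A₁*A₂ + B₁*C₂, A₁*B₂ + B₁*D₂, C₁*A₂ + D₁*C₂, C₁*B₂ + D₁*D₂, ?_, ?_⟩
  · have : (A₁*A₂ + B₁*C₂) * (C₁*B₂ + D₁*D₂) - (A₁*B₂ + B₁*D₂) * (C₁*A₂ + D₁*C₂)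
        = (A₁ * D₁ - B₁ * C₁) * (A₂ * D₂ - B₂ * C₂) := by ring
    rw [this]
    exact mul_ne_zero hdet₁ hdet₂
  · intro x hx
    obtain ⟨hd₂, hg₂⟩ := hg x hx
    obtain ⟨hd₁, hf₁⟩ := hf (g x) (hgmaps hx)
    have key : g x * (C₂ * x + D₂) = A₂ * x + B₂ := by
      rw [hg₂]; exact div_mul_cancel₀ _ hd₂
    have hden : (C₁*A₂ + D₁*C₂) * x + (C₁*B₂ + D₁*D₂)
        = (C₁ * g x + D₁) * (C₂ * x + D₂) := by
      have : (C₁ * g x + D₁) * (C₂ * x + D₂) = C₁ * (g x * (C₂ * x + D₂)) + D₁ * (C₂*x+D₂) := by ring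
      rw [this, key]; ring
    have hnum : (A₁*A₂ + B₁*C₂) * x + (A₁*B₂ + B₁*D₂)
        = (A₁ * g x + B₁) * (C₂ * x + D₂) := by
      have : (A₁ * g x + B₁) * (C₂ * x + D₂) = A₁ * (g x * (C₂ * x + D₂)) + B₁ * (C₂*x+D₂) := by ring
      rw [this, key]; ring
    constructor
    · rw [hden]; exact mul_ne_zero hd₁ hd₂
    · show f (g x) = _
      rw [hf₁, hden, hnum, mul_div_mul_right _ _ hd₂]

lemma mobius_mirror {k : ℝ → ℝ} (hk : IsMobiusOn k) :
    IsMobiusOn (fun x => 1 - k (1 - x)) := by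
  obtain ⟨A, B, C, D, hdet, hk⟩ := hk
  refine ⟨A - C, C + D - A - B, -C, C + D, ?_, ?_⟩
  · have : (A - C) * (C + D) - (C + D - A - B) * (-C) = A * D - B * C := by ring
    rw [this]; exact hdet
  · intro x hx
    have hx' : 1 - x ∈ Set.Icc (0:ℝ) 1 := by
      constructor <;> [linarith [hx.2]; linarith [hx.1]]
    obtain ⟨hd, hkx⟩ := hk (1 - x) hx'
    have hd' : -C * x + (C + D) ≠ 0 := by
      have : -C * x + (C + D) = C * (1 - x) + D := by ring
      rw [this]; exact hd
    refine ⟨hd', ?_⟩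
    show 1 - k (1 - x) = _
    rw [hkx, eq_div_iff hd']
    have e : C * (1 - x) + D = -C * x + (C + D) := by ring
    rw [e, sub_mul, one_mul, div_mul_cancel₀ _ hd']
    ring

lemma core_lt {h : ℝ → ℝ} (hM : IsMobiusOn h)
    (hmono : StrictMonoOn h (Set.Icc 0 1))
    (hmaps : Set.MapsTo h (Set.Icc 0 1) (Set.Icc 0 1))
    (h0 : h 0 = 0) (h1 : h 1 < 1)
    (hattr : IsAttractingFixedPt h 0) :
    ∀ x ∈ Set.Ioc (0:ℝ) 1, h x < x := by
  obtain ⟨A, B, C, D, hdet, hrep⟩ := hM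
  have h0m : (0:ℝ) ∈ Set.Icc (0:ℝ) 1 := by norm_num
  have h1m : (1:ℝ) ∈ Set.Icc (0:ℝ) 1 := by norm_num
  have hD : D ≠ 0 := by
    have := (hrep 0 h0m).1; simpa using this
  have hB : B = 0 := by
    have := (hrep 0 h0m).2
    rw [h0] at this
    have : (A * 0 + B) / (C * 0 + D) = 0 := this.symm
    simp only [mul_zero, zero_add] at this
    rcases div_eq_zero_iff.mp this with hb | hd
    · exact hb
    · exact absurd hd hD
  -- the key polynomial P x = (x - h x) * (C x + D)^2
  set P : ℝ → ℝ := fun x => x * (C * x + D - A) * (C * x + D) with hP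
  have hPform : ∀ x ∈ Set.Icc (0:ℝ) 1, P x = (x - h x) * (C * x + D)^2 := by
    intro x hx
    obtain ⟨hd, hfx⟩ := hrep x hx
    rw [hfx, hB]
    have e : (A * x + 0) / (C * x + D) * (C * x + D) = A * x + 0 := div_mul_cancel₀ _ hd
    show x * (C * x + D - A) * (C * x + D) = _
    linear_combination (C * x + D) * e
  have hPcont : Continuous P := by fun_prop
  have hdcont : Continuous (fun x : ℝ => C * x + D) := by fun_prop
  -- positivity of x - h x for small positive x
  obtain ⟨ε, hε, hbasin⟩ := hattr.2.2
  have hsmall : ∀ x : ℝ, 0 < x → x < ε → x ≤ 1 → h x < x := by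
    intro x hx0 hxε hx1
    by_contra hcon
    push_neg at hcon
    have hxm : x ∈ Set.Icc (0:ℝ) 1 := ⟨le_of_lt hx0, hx1⟩
    have key : ∀ n, h^[n] x ∈ Set.Icc (0:ℝ) 1 ∧ x ≤ h^[n] x := by
      intro n
      induction n with
      | zero => exact ⟨hxm, le_refl x⟩
      | succ n ih =>
        rw [Function.iterate_succ_apply']
        refine ⟨hmaps ih.1, ?_⟩
        calc x ≤ h x := hcon
        _ ≤ h (h^[n] x) := hmono.monotoneOn hxm ih.1 ih.2
    have htt := hbasin x hxm (by rw [sub_zero, abs_of_pos hx0]; exact hxε)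
    have : x ≤ 0 := ge_of_tendsto htt (Filter.Eventually.of_forall (fun n => (key n).2))
    linarith
  have hPsmallpos : ∀ x : ℝ, 0 < x → x < ε → x ≤ 1 → 0 < P x := by
    intro x hx0 hxε hx1
    rw [hPform x ⟨le_of_lt hx0, hx1⟩]
    have := hsmall x hx0 hxε hx1
    have hd := (hrep x ⟨le_of_lt hx0, hx1⟩).1
    have : 0 < x - h x := by linarith
    positivity
  have hP1 : 0 < P 1 := by
    rw [hPform 1 h1m]
    have hd := (hrep 1 h1m).1
    have : 0 < 1 - h 1 := by linarith
    positivity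
  -- main claim
  rintro x ⟨hx0, hx1⟩
  by_contra hcon
  push_neg at hcon  -- x ≤ h x
  have hPx : P x ≤ 0 := by
    rw [hPform x ⟨le_of_lt hx0, hx1⟩]
    have : x - h x ≤ 0 := by linarith
    nlinarith [sq_nonneg (C * x + D)]
  have hx1' : x < 1 := by
    rcases lt_or_eq_of_le hx1 with h' | h'
    · exact h'
    · exfalso; rw [h'] at hPx; linarith
  -- find a root ρ of n in (x', x]
  set x' : ℝ := min ε x / 2 with hx'
  have hx'0 : 0 < x' := by positivity
  have hx'ε : x' < ε := by
    have : min ε x ≤ ε := min_le_left _ _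
    simp only [hx']; linarith
  have hx'x : x' < x := by
    have : min ε x ≤ x := min_le_right _ _
    simp only [hx']; linarith
  have hx'1 : x' ≤ 1 := by linarith
  have hPx' : 0 < P x' := hPsmallpos x' hx'0 hx'ε hx'1
  have hroot : ∃ ρ ∈ Set.Icc x' x, P ρ = 0 := by
    have := intermediate_value_Icc' (le_of_lt hx'x) hPcont.continuousOn
    have h0mem : (0:ℝ) ∈ Set.Icc (P x) (P x') := ⟨hPx, le_of_lt hPx'⟩
    obtain ⟨ρ, hρ, hPρ⟩ := this h0mem
    exact ⟨ρ, hρ, hPρ⟩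
  obtain ⟨ρ, ⟨hρl, hρr⟩, hPρ⟩ := hroot
  have hρ0 : 0 < ρ := lt_of_lt_of_le hx'0 hρl
  have hρ1 : ρ < 1 := lt_of_le_of_lt hρr hx1'
  have hdρ : C * ρ + D ≠ 0 := (hrep ρ ⟨le_of_lt hρ0, le_of_lt hρ1⟩).1
  have hnρ : C * ρ + D - A = 0 := by
    rcases mul_eq_zero.mp hPρ with h' | h'
    · rcases mul_eq_zero.mp h' with h'' | h''
      · exact absurd h'' (ne_of_gt hρ0)
      · exact h''
    · exact absurd h' hdρ
  have hA : A = C * ρ + D := by linarith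
  have hC : C ≠ 0 := by
    intro hC0
    rw [hC0] at hA hnρ
    have : P x' = 0 := by
      simp only [hP]; rw [hC0]
      simp only [zero_mul, zero_add]
      have : D - A = 0 := by rw [hA]; ring
      rw [this]; ring
    linarith
  -- signs
  have hsx' : C * (C * x' + D) < 0 := by
    have hPx'2 : x' * (C * (x' - ρ)) * (C * x' + D) > 0 := by
      have : C * x' + D - A = C * (x' - ρ) := by rw [hA]; ring
      have e : P x' = x' * (C * (x' - ρ)) * (C * x' + D) := by
        simp only [hP]; rw [← this]
      rw [← e]; exact hPx'
    have hx'ρ : x' < ρ := by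
      rcases lt_or_eq_of_le hρl with h' | h'
      · exact h'
      · exfalso; rw [← h'] at hPρ; linarith
    nlinarith [mul_pos hx'0 (show (0:ℝ) < ρ - x' by linarith)]
  have hs1 : 0 < C * (C * 1 + D) := by
    have hP1' : (1:ℝ) * (C * (1 - ρ)) * (C * 1 + D) > 0 := by
      have : C * 1 + D - A = C * (1 - ρ) := by rw [hA]; ring
      have e : P 1 = 1 * (C * (1 - ρ)) * (C * 1 + D) := by
        simp only [hP]; rw [← this]
      rw [← e]; exact hP1
    nlinarith [hρ1]
  have hopp : (C * x' + D) * (C * 1 + D) < 0 := by nlinarith [sq_nonneg C]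
  -- IVT gives a zero of the denominator, contradiction
  have : ∃ z ∈ Set.Icc x' 1, C * z + D = 0 := by
    rcases lt_or_gt_of_ne (fun h => by rw [h] at hopp; simp at hopp : (C * x' + D) ≠ 0) with hneg | hpos
    · have hpos1 : 0 < C * 1 + D := by nlinarith
      have := intermediate_value_Icc (le_of_lt (lt_of_lt_of_le hx'x hx1)) hdcont.continuousOn
      obtain ⟨z, hz, hz0⟩ := this ⟨le_of_lt hneg, le_of_lt hpos1⟩
      exact ⟨z, hz, hz0⟩
    · have hneg1 : C * 1 + D < 0 := by nlinarith
      have := intermediate_value_Icc' (le_of_lt (lt_of_lt_of_le hx'x hx1)) hdcont.continuousOn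
      obtain ⟨z, hz, hz0⟩ := this ⟨le_of_lt hneg1, le_of_lt hpos⟩
      exact ⟨z, hz, hz0⟩
  obtain ⟨z, ⟨hzl, hzr⟩, hz0⟩ := this
  exact (hrep z ⟨le_trans (le_of_lt hx'0) hzl, hzr⟩).1 hz0

lemma core_tendsto {h : ℝ → ℝ} (hcont : ContinuousOn h (Set.Icc 0 1))
    (hmaps : Set.MapsTo h (Set.Icc 0 1) (Set.Icc 0 1))
    (hlt : ∀ x ∈ Set.Ioc (0:ℝ) 1, h x < x) (h0 : h 0 = 0) :
    ∀ x ∈ Set.Icc (0:ℝ) 1, Filter.Tendsto (fun n => h^[n] x) Filter.atTop (nhds 0) := by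
  intro x hx
  set u : ℕ → ℝ := fun n => h^[n] x with hu
  have umem : ∀ n, u n ∈ Set.Icc (0:ℝ) 1 := by
    intro n; induction n with
    | zero => exact hx
    | succ n ih => show h^[n+1] x ∈ Set.Icc (0:ℝ) 1; rw [Function.iterate_succ_apply']; exact hmaps ih
  have hstep : ∀ n, u (n + 1) = h (u n) := by
    intro n; show h^[n+1] x = h (h^[n] x); rw [Function.iterate_succ_apply']
  have hanti : ∀ n, u (n+1) ≤ u n := by
    intro n
    rw [hstep]
    rcases lt_or_eq_of_le (umem n).1 with hpos | hzero
    · exact le_of_lt (hlt (u n) ⟨hpos, (umem n).2⟩)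
    · rw [← hzero, h0]
  have hantitone : Antitone u := antitone_nat_of_succ_le hanti
  have hbdd : BddBelow (Set.range u) := ⟨0, fun y ⟨n, hn⟩ => hn ▸ (umem n).1⟩
  set c : ℝ := ⨅ n, u n with hc
  have htend : Filter.Tendsto u Filter.atTop (nhds c) := tendsto_atTop_ciInf hantitone hbdd
  have hc0 : 0 ≤ c := le_ciInf (fun n => (umem n).1)
  have hc1 : c ≤ 1 := le_trans (ciInf_le hbdd 0) (umem 0).2
  have hfix : h c = c := by
    have h1 : Filter.Tendsto (fun n => u (n+1)) Filter.atTop (nhds c) :=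
      htend.comp (Filter.tendsto_add_atTop_nat 1)
    have h2 : Filter.Tendsto (fun n => h (u n)) Filter.atTop (nhds (h c)) := by
      have hcw : ContinuousWithinAt h (Set.Icc 0 1) c := hcont c ⟨hc0, hc1⟩
      apply hcw.tendsto.comp
      exact tendsto_nhdsWithin_of_tendsto_nhds_of_eventually_within u htend
        (Filter.Eventually.of_forall umem)
    have : (fun n => u (n+1)) = (fun n => h (u n)) := funext hstep
    rw [this] at h1
    exact tendsto_nhds_unique h2 h1
  have : c = 0 := by
    by_contra hne
    have hcpos : 0 < c := lt_of_le_of_ne hc0 (Ne.symm hne)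
    have := hlt c ⟨hcpos, hc1⟩
    rw [hfix] at this
    exact lt_irrefl c this
  rw [← this]
  exact htend

lemma mobius_diff {f : ℝ → ℝ} (hf : IsMobiusOn f) :
    ∃ K : ℝ, K ≠ 0 ∧ ∃ d : ℝ → ℝ, (∀ x ∈ Set.Icc (0:ℝ) 1, d x ≠ 0) ∧
      ∀ x ∈ Set.Icc (0:ℝ) 1, ∀ y ∈ Set.Icc (0:ℝ) 1,
        (f x - f y) * (d x * d y) = K * (x - y) := by
  obtain ⟨A, B, C, D, hdet, hrep⟩ := hf
  refine ⟨A * D - B * C, hdet, fun t => C * t + D, fun x hx => (hrep x hx).1, ?_⟩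
  intro x hx y hy
  obtain ⟨hdx, hfx⟩ := hrep x hx
  obtain ⟨hdy, hfy⟩ := hrep y hy
  rw [hfx, hfy]
  have ex : (A * x + B) / (C * x + D) * (C * x + D) = A * x + B := div_mul_cancel₀ _ hdx
  have ey : (A * y + B) / (C * y + D) * (C * y + D) = A * y + B := div_mul_cancel₀ _ hdy
  linear_combination (C * y + D) * ex - (C * x + D) * ey

lemma mobius_sub_ne {f : ℝ → ℝ} (hf : IsMobiusOn f) {x y : ℝ}
    (hx : x ∈ Set.Icc (0:ℝ) 1) (hy : y ∈ Set.Icc (0:ℝ) 1) (hne : x ≠ y) :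
    f x ≠ f y := by
  obtain ⟨K, hK, d, hd, hdiff⟩ := mobius_diff hf
  intro heq
  have := hdiff x hx y hy
  rw [heq, sub_self, zero_mul] at this
  have : x - y = 0 := by
    rcases mul_eq_zero.mp this.symm with h' | h'
    · exact absurd h' hK
    · exact h'
  exact hne (by linarith)

/-- cross-multiplied cross-ratio invariance -/
lemma mobius_cr {f : ℝ → ℝ} (hf : IsMobiusOn f) {p q : ℝ}
    (hp : p ∈ Set.Icc (0:ℝ) 1) (hq : q ∈ Set.Icc (0:ℝ) 1) :
    (q * (1 - p)) * ((f p - f 0) * (f 1 - f q))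
      = (p * (1 - q)) * ((f q - f 0) * (f 1 - f p)) := by
  obtain ⟨K, hK, d, hd, hdiff⟩ := mobius_diff hf
  have h0m : (0:ℝ) ∈ Set.Icc (0:ℝ) 1 := by norm_num
  have h1m : (1:ℝ) ∈ Set.Icc (0:ℝ) 1 := by norm_num
  have E1 := hdiff q hq 0 h0m
  have E2 := hdiff 1 h1m p hp
  have E3 := hdiff p hp 0 h0m
  have E4 := hdiff 1 h1m q hq
  have hprod : d p * d 0 * (d 1 * d q) ≠ 0 :=
    mul_ne_zero (mul_ne_zero (hd p hp) (hd 0 h0m)) (mul_ne_zero (hd 1 h1m) (hd q hq))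
  apply mul_right_cancel₀ hprod
  calc (q * (1 - p)) * ((f p - f 0) * (f 1 - f q)) * (d p * d 0 * (d 1 * d q))
      = (q * (1 - p)) * (((f p - f 0) * (d p * d 0)) * ((f 1 - f q) * (d 1 * d q))) := by ring
    _ = (q * (1 - p)) * ((K * (p - 0)) * (K * (1 - q))) := by rw [E3, E4]
    _ = (p * (1 - q)) * ((K * (q - 0)) * (K * (1 - p))) := by ring
    _ = (p * (1 - q)) * (((f q - f 0) * (d q * d 0)) * ((f 1 - f p) * (d 1 * d p))) := by
        rw [E1, E2]
    _ = (p * (1 - q)) * ((f q - f 0) * (f 1 - f p)) * (d p * d 0 * (d 1 * d q)) := by ring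

lemma anti_flip {f : ℝ → ℝ} (hf : StrictAntiOn f (Set.Icc 0 1)) {x y : ℝ}
    (hx : x ∈ Set.Icc (0:ℝ) 1) (hy : y ∈ Set.Icc (0:ℝ) 1) (h : f x ≤ f y) : y ≤ x := by
  by_contra hcon
  push_neg at hcon
  exact absurd (hf hx hy hcon) (by linarith)

structure MSet where
  f : ℝ → ℝ
  g : ℝ → ℝ
  hfM : IsMobiusOn f
  hgM : IsMobiusOn g
  hfmaps : Set.MapsTo f (Set.Icc 0 1) (Set.Icc 0 1)
  hgmaps : Set.MapsTo g (Set.Icc 0 1) (Set.Icc 0 1)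
  hfanti : StrictAntiOn f (Set.Icc 0 1)
  hganti : StrictAntiOn g (Set.Icc 0 1)
  hf1 : f 1 = 0
  hg0 : g 0 = 1
  ha1 : f 0 < 1
  hb0 : 0 < g 1
  hba : g 1 ≤ f 0
  hlt : ∀ x ∈ Set.Ioc (0:ℝ) 1, f (g x) < x
  hgt : ∀ x ∈ Set.Ico (0:ℝ) 1, x < g (f x)
  htend0 : ∀ x ∈ Set.Icc (0:ℝ) 1,
    Filter.Tendsto (fun n => (fun z => f (g z))^[n] x) Filter.atTop (nhds 0)
  htend1 : ∀ x ∈ Set.Icc (0:ℝ) 1,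
    Filter.Tendsto (fun n => (fun z => g (f z))^[n] x) Filter.atTop (nhds 1)

lemma i01_0 : (0:ℝ) ∈ Set.Icc (0:ℝ) 1 := by norm_num
lemma i01_1 : (1:ℝ) ∈ Set.Icc (0:ℝ) 1 := by norm_num

namespace MSet

variable (St : MSet)

lemma ha0 : 0 < St.f 0 := by
  have := St.hfanti i01_0 i01_1 (by norm_num)
  rw [St.hf1] at this; exact this

lemma hb1 : St.g 1 < 1 := by
  have := St.hganti i01_0 i01_1 (by norm_num)
  rw [St.hg0] at this; exact this

lemma fcont : ContinuousOn St.f (Set.Icc 0 1) := mobius_contOn St.hfM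
lemma gcont : ContinuousOn St.g (Set.Icc 0 1) := mobius_contOn St.hgM

lemma fsurj {t : ℝ} (h0 : 0 ≤ t) (h1 : t ≤ St.f 0) : ∃ z ∈ Set.Icc (0:ℝ) 1, St.f z = t := by
  apply anti_surj St.fcont
  rw [St.hf1]; exact ⟨h0, h1⟩

lemma gsurj {t : ℝ} (h0 : St.g 1 ≤ t) (h1 : t ≤ 1) : ∃ z ∈ Set.Icc (0:ℝ) 1, St.g z = t := by
  apply anti_surj St.gcont
  rw [St.hg0]; exact ⟨h0, h1⟩

end MSet

lemma hpos (St : MSet) {x : ℝ} (hx : x ∈ Set.Ioc (0:ℝ) 1) : 0 < St.f (St.g x) := by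
  have hxm : x ∈ Set.Icc (0:ℝ) 1 := ⟨le_of_lt hx.1, hx.2⟩
  have hgx : St.g x < 1 := by
    have := St.hganti i01_0 hxm hx.1
    rw [St.hg0] at this; exact this
  have := St.hfanti (St.hgmaps hxm) i01_1 hgx
  rw [St.hf1] at this; exact this

lemma klt1 (St : MSet) {x : ℝ} (hx : x ∈ Set.Ico (0:ℝ) 1) : St.g (St.f x) < 1 := by
  have hxm : x ∈ Set.Icc (0:ℝ) 1 := ⟨hx.1, le_of_lt hx.2⟩
  have hfx : 0 < St.f x := by
    have := St.hfanti hxm i01_1 hx.2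
    rw [St.hf1] at this; exact this
  have := St.hganti i01_0 (St.hfmaps hxm) hfx
  rw [St.hg0] at this; exact this

structure Gap (S : Set ℝ) where
  u : ℝ
  v : ℝ
  hu : u ∈ S
  hv : v ∈ S
  hlt : u < v
  h0 : 0 < u
  h1 : v < 1
  hdis : Set.Ioo u v ∩ S = ∅

structure SInv (St : MSet) (S : Set ℝ) : Prop where
  closed : IsClosed S
  sub : S ⊆ Set.Icc 0 1
  zero : (0:ℝ) ∈ S
  one : (1:ℝ) ∈ S
  mapf : ∀ z ∈ S, St.f z ∈ S
  mapg : ∀ z ∈ S, St.g z ∈ S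
  acc0 : ∀ δ : ℝ, 0 < δ → ∃ s ∈ S, 0 < s ∧ s < δ
  acc1 : ∀ δ : ℝ, 0 < δ → ∃ s ∈ S, 1 - δ < s ∧ s < 1

def GRel (St : MSet) {S : Set ℝ} (G G' : Gap S) : Prop :=
  (G.v ≤ St.f 0 ∧ ∃ p q : ℝ, p ∈ Set.Icc (0:ℝ) 1 ∧ q ∈ Set.Icc (0:ℝ) 1 ∧
     0 < p ∧ p < q ∧ q < 1 ∧ St.f p = G.v ∧ St.f q = G.u ∧ G'.u ≤ p ∧ q ≤ G'.v)
  ∨ (St.f 0 < G.v ∧ St.f 0 ≤ G.u ∧ ∃ p q : ℝ, p ∈ Set.Icc (0:ℝ) 1 ∧ q ∈ Set.Icc (0:ℝ) 1 ∧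
     0 < p ∧ p < q ∧ q < 1 ∧ St.g p = G.v ∧ St.g q = G.u ∧ G'.u ≤ p ∧ q ≤ G'.v)

lemma gap_extend (St : MSet) {S : Set ℝ} (hS : SInv St S) {p q : ℝ} (hp0 : 0 < p)
    (hpq : p < q) (hq1 : q < 1) (hdis : Set.Ioo p q ∩ S = ∅) :
    ∃ G' : Gap S, G'.u ≤ p ∧ q ≤ G'.v := by
  have hnotin : ∀ z ∈ S, z ∉ Set.Ioo p q := by
    intro z hz hzin
    have : z ∈ Set.Ioo p q ∩ S := ⟨hzin, hz⟩
    rw [hdis] at this; exact this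
  have hne_u : (S ∩ Set.Iic p).Nonempty := ⟨0, hS.zero, le_of_lt hp0⟩
  have hbdd_u : BddAbove (S ∩ Set.Iic p) := ⟨p, fun z hz => hz.2⟩
  have hu'mem : sSup (S ∩ Set.Iic p) ∈ S ∩ Set.Iic p :=
    (hS.closed.inter isClosed_Iic).csSup_mem hne_u hbdd_u
  have hne_v : (S ∩ Set.Ici q).Nonempty := ⟨1, hS.one, le_of_lt hq1⟩
  have hbdd_v : BddBelow (S ∩ Set.Ici q) := ⟨q, fun z hz => hz.2⟩
  have hv'mem : sInf (S ∩ Set.Ici q) ∈ S ∩ Set.Ici q :=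
    (hS.closed.inter isClosed_Ici).csInf_mem hne_v hbdd_v
  set u' := sSup (S ∩ Set.Iic p) with hu'
  set v' := sInf (S ∩ Set.Ici q) with hv'
  obtain ⟨s, hsS, hs0, hsq⟩ := hS.acc0 q (lt_trans hp0 hpq)
  have hsp : s ≤ p := by
    by_contra hcon
    push_neg at hcon
    exact hnotin s hsS ⟨hcon, hsq⟩
  have hu'0 : 0 < u' := lt_of_lt_of_le hs0 (le_csSup hbdd_u ⟨hsS, hsp⟩)
  obtain ⟨s', hs'S, hs'l, hs'1⟩ := hS.acc1 (1 - p) (by linarith)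
  have hs'q : q ≤ s' := by
    by_contra hcon
    push_neg at hcon
    exact hnotin s' hs'S ⟨by linarith, hcon⟩
  have hv'1 : v' < 1 := lt_of_le_of_lt (csInf_le hbdd_v ⟨hs'S, hs'q⟩) hs'1
  have hdis' : Set.Ioo u' v' ∩ S = ∅ := by
    ext z
    simp only [Set.mem_inter_iff, Set.mem_Ioo, Set.mem_empty_iff_false, iff_false]
    rintro ⟨⟨hz1, hz2⟩, hzS⟩
    rcases le_or_gt z p with hzp | hzp
    · exact absurd (le_csSup hbdd_u ⟨hzS, hzp⟩) (not_le.mpr hz1)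
    · rcases lt_or_ge z q with hzq | hzq
      · exact hnotin z hzS ⟨hzp, hzq⟩
      · exact absurd (csInf_le hbdd_v ⟨hzS, hzq⟩) (not_le.mpr hz2)
  refine ⟨⟨u', v', hu'mem.1, hv'mem.1, ?_, hu'0, hv'1, hdis'⟩, hu'mem.2, hv'mem.2⟩
  calc u' ≤ p := hu'mem.2
    _ < q := hpq
    _ ≤ v' := hv'mem.2

lemma gap_step (St : MSet) {S : Set ℝ} (hS : SInv St S) (G : Gap S) :
    ∃ G' : Gap S, GRel St G G' := by
  have hGv0 : 0 < G.v := lt_trans G.h0 G.hlt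
  have hGu1 : G.u < 1 := lt_trans G.hlt G.h1
  have hnotin : ∀ z ∈ S, z ∉ Set.Ioo G.u G.v := by
    intro z hz hzin
    have : z ∈ Set.Ioo G.u G.v ∩ S := ⟨hzin, hz⟩
    rw [G.hdis] at this; exact this
  rcases le_or_gt G.v (St.f 0) with hcase | hcase
  · -- f-case
    obtain ⟨p, hpm, hpeq⟩ := St.fsurj (le_of_lt hGv0) hcase
    obtain ⟨q, hqm, hqeq⟩ := St.fsurj (le_of_lt G.h0) (le_trans (le_of_lt G.hlt) hcase)
    have hpq : p < q := by
      by_contra hcon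
      push_neg at hcon
      have := St.hfanti.antitoneOn hqm hpm hcon
      rw [hpeq, hqeq] at this
      exact absurd G.hlt (not_lt.mpr this)
    have hdispq : Set.Ioo p q ∩ S = ∅ := by
      ext z
      simp only [Set.mem_inter_iff, Set.mem_Ioo, Set.mem_empty_iff_false, iff_false]
      rintro ⟨⟨hz1, hz2⟩, hzS⟩
      have hzm : z ∈ Set.Icc (0:ℝ) 1 :=
        ⟨le_trans hpm.1 (le_of_lt hz1), le_trans (le_of_lt hz2) hqm.2⟩
      have h1 : St.f z < G.v := by
        rw [← hpeq]; exact St.hfanti hpm hzm hz1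
      have h2 : G.u < St.f z := by
        rw [← hqeq]; exact St.hfanti hzm hqm hz2
      exact hnotin (St.f z) (hS.mapf z hzS) ⟨h2, h1⟩
    have hq1 : q < 1 := by
      rcases lt_or_eq_of_le hqm.2 with h' | h'
      · exact h'
      · exfalso
        rw [h', St.hf1] at hqeq
        exact absurd hqeq.symm (ne_of_gt G.h0)
    have hp0 : 0 < p := by
      rcases lt_or_eq_of_le hpm.1 with h' | h'
      · exact h'
      · exfalso
        obtain ⟨s, hsS, hs0, hsq⟩ := hS.acc0 q (lt_of_le_of_lt hpm.1 hpq)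
        have : s ∈ Set.Ioo p q ∩ S := ⟨⟨by rw [← h']; exact hs0, hsq⟩, hsS⟩
        rw [hdispq] at this; exact this
    obtain ⟨G', hG'u, hG'v⟩ := gap_extend St hS hp0 hpq hq1 hdispq
    exact ⟨G', Or.inl ⟨hcase, p, q, hpm, hqm, hp0, hpq, hq1, hpeq, hqeq, hG'u, hG'v⟩⟩
  · -- g-case
    have haS : St.f 0 ∈ S := hS.mapf 0 hS.zero
    have hau : St.f 0 ≤ G.u := by
      by_contra hcon
      push_neg at hcon
      exact hnotin (St.f 0) haS ⟨hcon, hcase⟩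
    have hbu : St.g 1 ≤ G.u := le_trans St.hba hau
    obtain ⟨p, hpm, hpeq⟩ := St.gsurj (le_trans St.hba (le_of_lt (lt_of_le_of_lt hau G.hlt)))
      (le_of_lt G.h1)
    obtain ⟨q, hqm, hqeq⟩ := St.gsurj hbu (le_of_lt hGu1)
    have hpq : p < q := by
      by_contra hcon
      push_neg at hcon
      have := St.hganti.antitoneOn hqm hpm hcon
      rw [hpeq, hqeq] at this
      exact absurd G.hlt (not_lt.mpr this)
    have hdispq : Set.Ioo p q ∩ S = ∅ := by
      ext z
      simp only [Set.mem_inter_iff, Set.mem_Ioo, Set.mem_empty_iff_false, iff_false]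
      rintro ⟨⟨hz1, hz2⟩, hzS⟩
      have hzm : z ∈ Set.Icc (0:ℝ) 1 :=
        ⟨le_trans hpm.1 (le_of_lt hz1), le_trans (le_of_lt hz2) hqm.2⟩
      have h1 : St.g z < G.v := by
        rw [← hpeq]; exact St.hganti hpm hzm hz1
      have h2 : G.u < St.g z := by
        rw [← hqeq]; exact St.hganti hzm hqm hz2
      exact hnotin (St.g z) (hS.mapg z hzS) ⟨h2, h1⟩
    have hp0 : 0 < p := by
      rcases lt_or_eq_of_le hpm.1 with h' | h'
      · exact h'
      · exfalso
        rw [← h', St.hg0] at hpeq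
        exact absurd hpeq (ne_of_gt G.h1)
    have hq1 : q < 1 := by
      rcases lt_or_eq_of_le hqm.2 with h' | h'
      · exact h'
      · exfalso
        obtain ⟨s', hs'S, hs'l, hs'1⟩ := hS.acc1 (1 - p) (by linarith)
        have : s' ∈ Set.Ioo p q ∩ S := ⟨⟨by linarith, by rw [h']; exact hs'1⟩, hs'S⟩
        rw [hdispq] at this; exact this
    obtain ⟨G', hG'u, hG'v⟩ := gap_extend St hS hp0 hpq hq1 hdispq
    exact ⟨G', Or.inr ⟨hcase, hau, p, q, hpm, hqm, hp0, hpq, hq1, hpeq, hqeq, hG'u, hG'v⟩⟩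

noncomputable def Gap.R {S : Set ℝ} (G : Gap S) : ℝ := G.v * (1 - G.u) / (G.u * (1 - G.v))

lemma Gap.den_pos {S : Set ℝ} (G : Gap S) : 0 < G.u * (1 - G.v) :=
  mul_pos G.h0 (by linarith [G.h1])

lemma Gap.R_gt_one {S : Set ℝ} (G : Gap S) : 1 < G.R := by
  rw [Gap.R, lt_div_iff₀ G.den_pos, one_mul]
  nlinarith [G.hlt, G.h0, G.h1]

lemma Gap.R_pos {S : Set ℝ} (G : Gap S) : 0 < G.R := lt_trans one_pos G.R_gt_one

lemma mid_le_R {S : Set ℝ} (G' : Gap S) {p q : ℝ} (hp0 : 0 < p) (hpq : p < q) (hq1 : q < 1)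
    (hu' : G'.u ≤ p) (hv' : q ≤ G'.v) : q * (1 - p) / (p * (1 - q)) ≤ G'.R := by
  rw [Gap.R]
  apply div_le_div₀ (by nlinarith [G'.h0, G'.h1, G'.hlt]) ?_ G'.den_pos ?_
  · apply mul_le_mul hv' (by linarith) (by linarith) (by nlinarith [G'.h0, G'.h1, G'.hlt])
  · apply mul_le_mul hu' (by linarith [G'.h1]) (by linarith [G'.h1]) (le_of_lt hp0)

lemma arith_f {a c u v : ℝ} (hu0 : 0 < u) (huv : u < v) (hva : v < a) (ha1 : a < 1)
    (hc : 0 ≤ c) (hca : c ≤ 1 - a) :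
    (1 - u) * (1 + c * (v - u)) * (a - v) ≤ (a - u) * (1 - v) := by
  nlinarith [mul_nonneg (mul_nonneg hc (by linarith : (0:ℝ) ≤ v - u))
    (by nlinarith : (0:ℝ) ≤ 1 - (1 - u) * (a - v))]

lemma arith_g {b c u v : ℝ} (hb0 : 0 < b) (hbu : b < u) (huv : u < v) (hv1 : v < 1)
    (hc : 0 ≤ c) (hcb : c ≤ b) :
    (1 + c * (v - u)) * (v * (u - b)) ≤ (v - b) * u := by
  nlinarith [mul_nonneg (mul_nonneg hc (by linarith : (0:ℝ) ≤ v - u))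
    (by nlinarith : (0:ℝ) ≤ 1 - v * (u - b))]

lemma R_step (St : MSet) {S : Set ℝ} {G G' : Gap S} (h : GRel St G G') :
    G.R * (1 + min (1 - St.f 0) (St.g 1) * (G.v - G.u)) ≤ G'.R := by
  have ha1 : St.f 0 < 1 := St.ha1
  have hb0 : 0 < St.g 1 := St.hb0
  set c := min (1 - St.f 0) (St.g 1) with hcdef
  have hc0 : 0 < c := lt_min (by linarith) hb0
  have hu0 : 0 < G.u := G.h0
  have hv1 : G.v < 1 := G.h1
  have huv : G.u < G.v := G.hlt
  have hv0 : 0 < G.v := lt_trans hu0 huv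
  have hu1 : G.u < 1 := lt_trans huv hv1
  rcases h with ⟨hva, p, q, hpm, hqm, hp0, hpq, hq1, hpeq, hqeq, hu', hv'⟩ |
    ⟨hva, hau, p, q, hpm, hqm, hp0, hpq, hq1, hpeq, hqeq, hu', hv'⟩
  · -- f-case
    set a := St.f 0 with hadef
    have hva' : G.v < a := by
      rw [← hpeq]
      exact St.hfanti i01_0 hpm hp0
    have hcr := mobius_cr St.hfM hpm hqm
    rw [hpeq, hqeq, St.hf1] at hcr
    have pos1 : 0 < p * (1 - q) := mul_pos hp0 (by linarith)
    have pos2 : 0 < G.u * (a - G.v) := mul_pos hu0 (by linarith)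
    have hmid : q * (1 - p) / (p * (1 - q)) = G.v * (a - G.u) / (G.u * (a - G.v)) := by
      rw [div_eq_div_iff (ne_of_gt pos1) (ne_of_gt pos2)]
      linear_combination hcr
    calc G.R * (1 + c * (G.v - G.u))
        ≤ G.v * (a - G.u) / (G.u * (a - G.v)) := by
          rw [Gap.R, div_mul_eq_mul_div, div_le_div_iff₀ G.den_pos pos2]
          have harith := arith_f hu0 huv hva' ha1 (le_of_lt hc0)
            (min_le_left (1 - St.f 0) (St.g 1))
          nlinarith [mul_le_mul_of_nonneg_left harith (mul_pos hu0 hv0).le]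
      _ = q * (1 - p) / (p * (1 - q)) := hmid.symm
      _ ≤ G'.R := mid_le_R G' hp0 hpq hq1 hu' hv'
  · -- g-case
    set b := St.g 1 with hbdef
    have hbu : b < G.u := by
      rw [← hqeq]
      exact St.hganti hqm i01_1 hq1
    have hcr := mobius_cr St.hgM hpm hqm
    rw [hpeq, hqeq, St.hg0] at hcr
    have pos1 : 0 < p * (1 - q) := mul_pos hp0 (by linarith)
    have pos2 : 0 < (1 - G.v) * (G.u - b) := mul_pos (by linarith) (by linarith)
    have hmid : q * (1 - p) / (p * (1 - q)) = (1 - G.u) * (G.v - b) / ((1 - G.v) * (G.u - b)) := by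
      rw [div_eq_div_iff (ne_of_gt pos1) (ne_of_gt pos2)]
      linear_combination hcr
    calc G.R * (1 + c * (G.v - G.u))
        ≤ (1 - G.u) * (G.v - b) / ((1 - G.v) * (G.u - b)) := by
          rw [Gap.R, div_mul_eq_mul_div, div_le_div_iff₀ G.den_pos pos2]
          have harith := arith_g hb0 hbu huv hv1 (le_of_lt hc0)
            (min_le_right (1 - St.f 0) (St.g 1))
          nlinarith [mul_le_mul_of_nonneg_left harith (by nlinarith : (0:ℝ) < (1 - G.u) * (1 - G.v)).le]
      _ = q * (1 - p) / (p * (1 - q)) := hmid.symm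
      _ ≤ G'.R := mid_le_R G' hp0 hpq hq1 hu' hv'

def orbSet (f g : ℝ → ℝ) (x : ℝ) : Set ℝ :=
  {y | ∃ w : List Bool, w ≠ [] ∧ y = w.foldr (fun s z => if s then f z else g z) x}

section OrbFacts

variable (St : MSet) {x : ℝ}

lemma foldr_mem_Icc (hx : x ∈ Set.Ioo (0:ℝ) 1) : ∀ w : List Bool,
    w.foldr (fun s z => if s then St.f z else St.g z) x ∈ Set.Icc (0:ℝ) 1 := by
  intro w
  induction w with
  | nil => exact ⟨le_of_lt hx.1, le_of_lt hx.2⟩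
  | cons s w ih =>
    rw [List.foldr_cons]
    cases s
    · simpa using St.hgmaps ih
    · simpa using St.hfmaps ih

lemma orb_sub (hx : x ∈ Set.Ioo (0:ℝ) 1) : orbSet St.f St.g x ⊆ Set.Icc 0 1 := by
  rintro y ⟨w, hw, rfl⟩
  exact foldr_mem_Icc St hx w

lemma orb_mapf {y : ℝ} (hy : y ∈ orbSet St.f St.g x) : St.f y ∈ orbSet St.f St.g x := by
  obtain ⟨w, hw, rfl⟩ := hy
  exact ⟨true :: w, by simp, by rw [List.foldr_cons]; simp⟩

lemma orb_mapg {y : ℝ} (hy : y ∈ orbSet St.f St.g x) : St.g y ∈ orbSet St.f St.g x := by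
  obtain ⟨w, hw, rfl⟩ := hy
  exact ⟨false :: w, by simp, by rw [List.foldr_cons]; simp⟩

lemma orb_hx : St.f (St.g x) ∈ orbSet St.f St.g x :=
  ⟨[true, false], by simp, by simp⟩

lemma orb_kx : St.g (St.f x) ∈ orbSet St.f St.g x :=
  ⟨[false, true], by simp, by simp⟩

lemma orb_hn : ∀ n, (fun z => St.f (St.g z))^[n] (St.f (St.g x)) ∈ orbSet St.f St.g x := by
  intro n
  induction n with
  | zero => exact orb_hx St
  | succ n ih =>
    rw [Function.iterate_succ_apply']
    exact orb_mapf St (orb_mapg St ih)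

lemma orb_kn : ∀ n, (fun z => St.g (St.f z))^[n] (St.g (St.f x)) ∈ orbSet St.f St.g x := by
  intro n
  induction n with
  | zero => exact orb_kx St
  | succ n ih =>
    rw [Function.iterate_succ_apply']
    exact orb_mapg St (orb_mapf St ih)

lemma orb_hn_Ioc (hx : x ∈ Set.Ioo (0:ℝ) 1) : ∀ n, (fun z => St.f (St.g z))^[n] (St.f (St.g x)) ∈ Set.Ioc (0:ℝ) 1 := by
  intro n
  induction n with
  | zero =>
    refine ⟨hpos St ⟨hx.1, le_of_lt hx.2⟩, ?_⟩
    exact (St.hfmaps (St.hgmaps ⟨le_of_lt hx.1, le_of_lt hx.2⟩)).2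
  | succ n ih =>
    rw [Function.iterate_succ_apply']
    refine ⟨hpos St ih, ?_⟩
    exact (St.hfmaps (St.hgmaps ⟨le_of_lt ih.1, ih.2⟩)).2

lemma orb_kn_Ico (hx : x ∈ Set.Ioo (0:ℝ) 1) : ∀ n, (fun z => St.g (St.f z))^[n] (St.g (St.f x)) ∈ Set.Ico (0:ℝ) 1 := by
  intro n
  induction n with
  | zero =>
    refine ⟨(St.hgmaps (St.hfmaps ⟨le_of_lt hx.1, le_of_lt hx.2⟩)).1, ?_⟩
    exact klt1 St ⟨le_of_lt hx.1, hx.2⟩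
  | succ n ih =>
    rw [Function.iterate_succ_apply']
    refine ⟨(St.hgmaps (St.hfmaps ⟨ih.1, le_of_lt ih.2⟩)).1, ?_⟩
    exact klt1 St ih

lemma closure_orb_SInv (hx : x ∈ Set.Ioo (0:ℝ) 1) : SInv St (closure (orbSet St.f St.g x)) := by
  set S := closure (orbSet St.f St.g x) with hSdef
  have hsub : S ⊆ Set.Icc 0 1 := closure_minimal (orb_sub St hx) isClosed_Icc
  have hmapf : ∀ z ∈ S, St.f z ∈ S := by
    intro z hz
    obtain ⟨u, humem, hulim⟩ := mem_closure_iff_seq_limit.mp hz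
    have hzm : z ∈ Set.Icc (0:ℝ) 1 := hsub hz
    have htendw : Filter.Tendsto u Filter.atTop (nhdsWithin z (Set.Icc 0 1)) :=
      tendsto_nhdsWithin_of_tendsto_nhds_of_eventually_within u hulim
        (Filter.Eventually.of_forall (fun n => orb_sub St hx (humem n)))
    have : Filter.Tendsto (fun n => St.f (u n)) Filter.atTop (nhds (St.f z)) :=
      (St.fcont z hzm).tendsto.comp htendw
    exact mem_closure_of_tendsto this
      (Filter.Eventually.of_forall (fun n => orb_mapf St (humem n)))
  have hmapg : ∀ z ∈ S, St.g z ∈ S := by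
    intro z hz
    obtain ⟨u, humem, hulim⟩ := mem_closure_iff_seq_limit.mp hz
    have hzm : z ∈ Set.Icc (0:ℝ) 1 := hsub hz
    have htendw : Filter.Tendsto u Filter.atTop (nhdsWithin z (Set.Icc 0 1)) :=
      tendsto_nhdsWithin_of_tendsto_nhds_of_eventually_within u hulim
        (Filter.Eventually.of_forall (fun n => orb_sub St hx (humem n)))
    have : Filter.Tendsto (fun n => St.g (u n)) Filter.atTop (nhds (St.g z)) :=
      (St.gcont z hzm).tendsto.comp htendw
    exact mem_closure_of_tendsto this
      (Filter.Eventually.of_forall (fun n => orb_mapg St (humem n)))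
  have hxIcc : x ∈ Set.Icc (0:ℝ) 1 := ⟨le_of_lt hx.1, le_of_lt hx.2⟩
  have htend0' := St.htend0 (St.f (St.g x)) (St.hfmaps (St.hgmaps hxIcc))
  have htend1' := St.htend1 (St.g (St.f x)) (St.hgmaps (St.hfmaps hxIcc))
  refine ⟨isClosed_closure, hsub, ?_, ?_, hmapf, hmapg, ?_, ?_⟩
  · exact mem_closure_of_tendsto htend0'
      (Filter.Eventually.of_forall (fun n => (orb_hn St n : _ ∈ orbSet St.f St.g x)))
  · exact mem_closure_of_tendsto htend1'
      (Filter.Eventually.of_forall (fun n => (orb_kn St n : _ ∈ orbSet St.f St.g x)))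
  · intro δ hδ
    have hev := htend0'.eventually_lt_const hδ
    obtain ⟨n, hn⟩ := hev.exists
    exact ⟨(fun z => St.f (St.g z))^[n] (St.f (St.g x)),
      subset_closure (orb_hn St n), (orb_hn_Ioc St hx n).1, hn⟩
  · intro δ hδ
    have hev := htend1'.eventually_const_lt (show 1 - δ < 1 by linarith)
    obtain ⟨n, hn⟩ := hev.exists
    exact ⟨(fun z => St.g (St.f z))^[n] (St.g (St.f x)),
      subset_closure (orb_kn St n), hn, (orb_kn_Ico St hx n).2⟩

end OrbFacts

lemma ubound {R₀ a u v : ℝ} (hR : 1 ≤ R₀) (hRle : R₀ ≤ v * (1 - u) / (u * (1 - v)))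
    (hu0 : 0 < u) (huv : u < v) (hv1 : v < 1) (hva : v ≤ a) (ha1 : a < 1) :
    u * (R₀ * (1 - a) + a) ≤ a := by
  rw [le_div_iff₀ (mul_pos hu0 (by linarith))] at hRle
  nlinarith [mul_le_mul_of_nonneg_left (show (1:ℝ) - a ≤ 1 - v by linarith)
      (mul_nonneg (by linarith : (0:ℝ) ≤ R₀) hu0.le),
    mul_le_mul_of_nonneg_right hva (by linarith : (0:ℝ) ≤ 1 - u)]

lemma vbound {R₀ a u v : ℝ} (hR : 1 ≤ R₀) (hRle : R₀ ≤ v * (1 - u) / (u * (1 - v)))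
    (hu0 : 0 < u) (huv : u < v) (hv1 : v < 1) (hau : a ≤ u) (ha0 : 0 < a) :
    R₀ * a ≤ v * (R₀ * a + 1 - a) := by
  rw [le_div_iff₀ (mul_pos hu0 (by linarith))] at hRle
  nlinarith [mul_le_mul_of_nonneg_left hau
      (mul_nonneg (by linarith : (0:ℝ) ≤ R₀) (by linarith : (0:ℝ) ≤ 1 - v)),
    mul_le_mul_of_nonneg_left (show a ≤ u from hau) (by linarith : (0:ℝ) ≤ v)]

lemma ratio_mono {u v U V : ℝ} (hU : 0 < U) (hu : U ≤ u) (huv : u < v) (hv : v ≤ V)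
    (hV : V < 1) : v * (1 - u) / (u * (1 - v)) ≤ V * (1 - U) / (U * (1 - V)) := by
  apply div_le_div₀ (by nlinarith) ?_ (mul_pos hU (by linarith)) ?_
  · apply mul_le_mul hv (by linarith) (by nlinarith) (by nlinarith)
  · apply mul_le_mul hu (by linarith) (by nlinarith) (by linarith)

set_option maxHeartbeats 2000000 in
lemma gaps_dense (St : MSet) {S : Set ℝ} (hS : SInv St S) : Set.Icc (0:ℝ) 1 ⊆ S := by
  intro y hy
  by_contra hyS
  have hy0 : 0 < y := lt_of_le_of_ne hy.1 (fun e => hyS (by rw [← e]; exact hS.zero))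
  have hy1 : y < 1 := lt_of_le_of_ne hy.2 (fun e => hyS (by rw [e]; exact hS.one))
  -- initial gap
  have hKne : (S ∩ Set.Iic y).Nonempty := ⟨0, hS.zero, hy.1⟩
  have hKbdd : BddAbove (S ∩ Set.Iic y) := ⟨y, fun z hz => hz.2⟩
  have hu0mem : sSup (S ∩ Set.Iic y) ∈ S ∩ Set.Iic y :=
    (hS.closed.inter isClosed_Iic).csSup_mem hKne hKbdd
  have hLne : (S ∩ Set.Ici y).Nonempty := ⟨1, hS.one, hy.2⟩
  have hLbdd : BddBelow (S ∩ Set.Ici y) := ⟨y, fun z hz => hz.2⟩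
  have hv0mem : sInf (S ∩ Set.Ici y) ∈ S ∩ Set.Ici y :=
    (hS.closed.inter isClosed_Ici).csInf_mem hLne hLbdd
  have huy : sSup (S ∩ Set.Iic y) < y :=
    lt_of_le_of_ne hu0mem.2 (fun e => hyS (by rw [← e]; exact hu0mem.1))
  have hyv : y < sInf (S ∩ Set.Ici y) :=
    lt_of_le_of_ne hv0mem.2 (fun e => hyS (by rw [e]; exact hv0mem.1))
  have hu00 : 0 < sSup (S ∩ Set.Iic y) := by
    obtain ⟨s, hsS, hs0, hsy⟩ := hS.acc0 y hy0
    exact lt_of_lt_of_le hs0 (le_csSup hKbdd ⟨hsS, le_of_lt hsy⟩)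
  have hv01 : sInf (S ∩ Set.Ici y) < 1 := by
    obtain ⟨s', hs'S, hs'l, hs'1⟩ := hS.acc1 (1 - y) (by linarith)
    exact lt_of_le_of_lt (csInf_le hLbdd ⟨hs'S, Set.mem_Ici.mpr (by linarith)⟩) hs'1
  have hdis0 : Set.Ioo (sSup (S ∩ Set.Iic y)) (sInf (S ∩ Set.Ici y)) ∩ S = ∅ := by
    ext z
    simp only [Set.mem_inter_iff, Set.mem_Ioo, Set.mem_empty_iff_false, iff_false]
    rintro ⟨⟨hz1, hz2⟩, hzS⟩
    rcases le_or_gt z y with hzy | hzy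
    · exact absurd (le_csSup hKbdd ⟨hzS, hzy⟩) (not_le.mpr hz1)
    · exact absurd (csInf_le hLbdd ⟨hzS, le_of_lt hzy⟩) (not_le.mpr hz2)
  set G₀ : Gap S := ⟨sSup (S ∩ Set.Iic y), sInf (S ∩ Set.Ici y), hu0mem.1, hv0mem.1,
    lt_trans huy hyv, hu00, hv01, hdis0⟩ with hG₀
  -- the chain
  have hstep : ∀ G : Gap S, ∃ G', GRel St G G' := gap_step St hS
  obtain ⟨chain, hchain0, hrel⟩ :
      ∃ c : ℕ → Gap S, c 0 = G₀ ∧ ∀ n, GRel St (c n) (c (n+1)) := by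
    refine ⟨fun n => Nat.rec G₀ (fun _ G => (hstep G).choose) n, rfl, fun n => ?_⟩
    exact (hstep _).choose_spec
  have ha0 : 0 < St.f 0 := St.ha0
  have ha1 : St.f 0 < 1 := St.ha1
  have hb0 : 0 < St.g 1 := St.hb0
  set a := St.f 0 with hadef
  set b := St.g 1 with hbdef
  set c₀ := min (1 - a) b with hc₀def
  have hc₀ : 0 < c₀ := lt_min (by linarith) hb0
  set R₀ := G₀.R with hR₀def
  have hR₀ : 1 < R₀ := G₀.R_gt_one
  have hgain : ∀ n, (chain n).R * (1 + c₀ * ((chain n).v - (chain n).u)) ≤ (chain (n+1)).R :=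
    fun n => R_step St (hrel n)
  have hRmono : ∀ n, R₀ ≤ (chain n).R := by
    intro n
    induction n with
    | zero => rw [hchain0]
    | succ n ih =>
      calc R₀ ≤ (chain n).R := ih
        _ ≤ (chain n).R * (1 + c₀ * ((chain n).v - (chain n).u)) := by
            apply le_mul_of_one_le_right (chain n).R_pos.le
            nlinarith [(chain n).hlt]
        _ ≤ (chain (n+1)).R := hgain n
  -- the ub constant and its witness
  have hden : (0:ℝ) < R₀ * (1 - a) + a := by nlinarith
  have hub0 : 0 < a / (R₀ * (1 - a) + a) := div_pos ha0 hden
  have huba : a / (R₀ * (1 - a) + a) < a := by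
    rw [div_lt_iff₀ hden]
    nlinarith [mul_pos ha0 (mul_pos (sub_pos.mpr hR₀) (sub_pos.mpr ha1))]
  obtain ⟨wb, hwbm, hwbeq⟩ := St.fsurj hub0.le huba.le
  have hwb0 : 0 < wb := by
    rcases lt_or_eq_of_le hwbm.1 with h' | h'
    · exact h'
    · exfalso; rw [← h'] at hwbeq; rw [← hadef] at hwbeq; linarith [huba, hwbeq]
  have hUb : ∀ n, (chain n).v ≤ a → (chain n).u ≤ a / (R₀ * (1 - a) + a) := by
    intro n hva
    rw [le_div_iff₀ hden]
    exact ubound hR₀.le (hRmono n) (chain n).h0 (chain n).hlt (chain n).h1 hva ha1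
  -- the vb constant and its witness
  have hden2 : (0:ℝ) < R₀ * a + 1 - a := by nlinarith
  have hvb1 : R₀ * a / (R₀ * a + 1 - a) < 1 := by
    rw [div_lt_one hden2]; nlinarith
  have havb : a < R₀ * a / (R₀ * a + 1 - a) := by
    rw [lt_div_iff₀ hden2]; nlinarith [mul_pos ha0 (show (0:ℝ) < 1 - a by linarith)]
  obtain ⟨zb, hzbm, hzbeq⟩ := St.gsurj (le_trans St.hba (le_of_lt havb)) hvb1.le
  have hzb1 : zb < 1 := by
    rcases lt_or_eq_of_le hzbm.2 with h' | h'
    · exact h'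
    · exfalso; rw [h'] at hzbeq; rw [← hbdef] at hzbeq
      have : b ≤ a := St.hba
      linarith [havb, hzbeq]
  have hVb : ∀ n, a ≤ (chain n).u → R₀ * a / (R₀ * a + 1 - a) ≤ (chain n).v := by
    intro n hau
    rw [div_le_iff₀ hden2]
    exact vbound hR₀.le (hRmono n) (chain n).h0 (chain n).hlt (chain n).h1 hau ha0
  -- the c₂ constant
  obtain ⟨c₂, hc₂0, hc₂⟩ : ∃ c₂ : ℝ, 0 < c₂ ∧ ∀ qq uu : ℝ, qq ∈ Set.Icc (0:ℝ) 1 →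
      St.g qq = uu → uu ≤ zb → b < uu → c₂ ≤ qq := by
    rcases le_or_gt zb b with hcase | hcase
    · exact ⟨1, one_pos, fun qq uu hqq heq hle hgt => absurd (lt_of_lt_of_le hgt hle)
        (not_lt.mpr hcase)⟩
    · obtain ⟨m, hmm, hmeq⟩ := St.gsurj hcase.le (le_of_lt hzb1)
      have hm0 : 0 < m := by
        rcases lt_or_eq_of_le hmm.1 with h' | h'
        · exact h'
        · exfalso; rw [← h', St.hg0] at hmeq; linarith [hzb1, hmeq]
      refine ⟨m, hm0, fun qq uu hqq heq hle hgt => ?_⟩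
      exact anti_flip St.hganti hqq hmm (by rw [heq, hmeq]; exact hle)
  -- the floor
  set ρ := min (min (chain 0).v (chain 1).v) (min wb c₂) with hρdef
  have hρ0 : 0 < ρ :=
    lt_min (lt_min (lt_trans (chain 0).h0 (chain 0).hlt) (lt_trans (chain 1).h0 (chain 1).hlt))
      (lt_min hwb0 hc₂0)
  have hfloorkey : ∀ n, ρ ≤ (chain n).v ∧ ρ ≤ (chain (n+1)).v := by
    intro n
    induction n with
    | zero =>
      exact ⟨le_trans (min_le_left _ _) (min_le_left _ _),
        le_trans (min_le_left _ _) (min_le_right _ _)⟩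
    | succ n ih =>
      refine ⟨ih.2, ?_⟩
      rcases hrel (n+1) with ⟨hva, p, q, hpm, hqm, hp0, hpq, hq1, hpeq, hqeq, hu', hv'⟩ |
        ⟨hva, hau, p, q, hpm, hqm, hp0, hpq, hq1, hpeq, hqeq, hu', hv'⟩
      · -- f-case at n+1
        have h1 : (chain (n+1)).u ≤ a / (R₀ * (1 - a) + a) := hUb (n+1) hva
        have h2 : wb ≤ q := anti_flip St.hfanti hqm hwbm (by rw [hqeq, hwbeq]; exact h1)
        calc ρ ≤ wb := le_trans (min_le_right _ _) (min_le_left _ _)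
          _ ≤ q := h2
          _ ≤ _ := hv'
      · -- g-case at n+1
        rcases hrel n with ⟨hva0, p0, q0, hp0m, hq0m, hp00, hp0q0, hq01, hp0eq, hq0eq, hu0', hv0'⟩ |
          ⟨hva0, hau0, p0, q0, hp0m, hq0m, hp00, hp0q0, hq01, hp0eq, hq0eq, hu0', hv0'⟩
        · -- f at n, g at n+1: h-trick
          have hq0' : 0 < q := lt_trans hp0 hpq
          have hU1m : (chain (n+1)).u ∈ Set.Icc (0:ℝ) 1 := hS.sub (chain (n+1)).hu
          have h1 : (chain n).v ≤ St.f (St.g q) := by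
            rw [hqeq, ← hp0eq]
            exact St.hfanti.antitoneOn hU1m hp0m hu0'
          have h2 : St.f (St.g q) < q := St.hlt q ⟨hq0', hqm.2⟩
          calc ρ ≤ (chain n).v := ih.1
            _ ≤ St.f (St.g q) := h1
            _ ≤ q := h2.le
            _ ≤ _ := hv'
        · -- g at n, g at n+1
          have hVn : R₀ * a / (R₀ * a + 1 - a) ≤ (chain n).v := hVb n hau0
          have hp0z : p0 ≤ zb := anti_flip St.hganti hzbm hp0m (by rw [hzbeq, hp0eq]; exact hVn)
          have hU1z : (chain (n+1)).u ≤ zb := le_trans hu0' hp0z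
          have hbU1 : b < (chain (n+1)).u := by
            rw [← hqeq]; exact St.hganti hqm i01_1 hq1
          have h3 := hc₂ q ((chain (n+1)).u) hqm hqeq hU1z hbU1
          calc ρ ≤ c₂ := le_trans (min_le_right _ _) (min_le_right _ _)
            _ ≤ q := h3
            _ ≤ _ := hv'
  have hfloor : ∀ n, ρ ≤ (chain n).v := fun n => (hfloorkey n).1
  -- the ceiling
  have hmin0 : (0:ℝ) < min ρ a := lt_min hρ0 ha0
  obtain ⟨wρ, hwρm, hwρeq⟩ := St.fsurj hmin0.le (min_le_right ρ a)
  have hwρ1 : wρ < 1 := by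
    rcases lt_or_eq_of_le hwρm.2 with h' | h'
    · exact h'
    · exfalso; rw [h', St.hf1] at hwρeq; linarith [hmin0, hwρeq]
  set Cc := max (chain 0).u (max wρ zb) with hCcdef
  have hCc1 : Cc < 1 := max_lt (lt_trans (chain 0).hlt (chain 0).h1) (max_lt hwρ1 hzb1)
  have hCc0 : 0 < Cc := lt_of_lt_of_le (chain 0).h0 (le_max_left _ _)
  have hceil : ∀ n, (chain n).u ≤ Cc := by
    intro n
    cases n with
    | zero => exact le_max_left _ _
    | succ n =>
      rcases hrel n with ⟨hva, p, q, hpm, hqm, hp0, hpq, hq1, hpeq, hqeq, hu', hv'⟩ |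
        ⟨hva, hau, p, q, hpm, hqm, hp0, hpq, hq1, hpeq, hqeq, hu', hv'⟩
      · have hm : min ρ a ≤ (chain n).v := le_trans (min_le_left _ _) (hfloor n)
        have hp : p ≤ wρ := anti_flip St.hfanti hwρm hpm (by rw [hwρeq, hpeq]; exact hm)
        calc (chain (n+1)).u ≤ p := hu'
          _ ≤ wρ := hp
          _ ≤ Cc := le_trans (le_max_left _ _) (le_max_right _ _)
      · have hVn : R₀ * a / (R₀ * a + 1 - a) ≤ (chain n).v := hVb n hau
        have hp : p ≤ zb := anti_flip St.hganti hzbm hpm (by rw [hzbeq, hpeq]; exact hVn)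
        calc (chain (n+1)).u ≤ p := hu'
          _ ≤ zb := hp
          _ ≤ Cc := le_trans (le_max_right _ _) (le_max_right _ _)
  -- region bounds
  have hρ1 : ρ ≤ 1 := le_trans (hfloor 0) (chain 0).h1.le
  set UU := St.f (St.g ρ) with hUUdef
  have hUU0 : 0 < UU := hpos St ⟨hρ0, hρ1⟩
  have hUU : ∀ n, UU ≤ (chain n).u := by
    intro n
    have hVnm : (chain n).v ∈ Set.Icc (0:ℝ) 1 := hS.sub (chain n).hv
    have hρm : ρ ∈ Set.Icc (0:ℝ) 1 := ⟨hρ0.le, hρ1⟩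
    have m1 : St.g (chain n).v ≤ St.g ρ := St.hganti.antitoneOn hρm hVnm (hfloor n)
    have m2 : UU ≤ St.f (St.g (chain n).v) :=
      St.hfanti.antitoneOn (St.hgmaps hVnm) (St.hgmaps hρm) m1
    have hin : St.f (St.g (chain n).v) ∈ S := hS.mapf _ (hS.mapg _ (chain n).hv)
    have hlt' : St.f (St.g (chain n).v) < (chain n).v :=
      St.hlt _ ⟨lt_trans (chain n).h0 (chain n).hlt, (chain n).h1.le⟩
    have hle' : St.f (St.g (chain n).v) ≤ (chain n).u := by
      by_contra hcon
      push_neg at hcon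
      have : St.f (St.g (chain n).v) ∈ Set.Ioo (chain n).u (chain n).v ∩ S :=
        ⟨⟨hcon, hlt'⟩, hin⟩
      rw [(chain n).hdis] at this
      exact this
    linarith
  set VV := St.g (St.f Cc) with hVVdef
  have hVV1 : VV < 1 := klt1 St ⟨hCc0.le, hCc1⟩
  have hVV : ∀ n, (chain n).v ≤ VV := by
    intro n
    have hUnm : (chain n).u ∈ Set.Icc (0:ℝ) 1 := hS.sub (chain n).hu
    have hCcm : Cc ∈ Set.Icc (0:ℝ) 1 := ⟨hCc0.le, hCc1.le⟩
    have m1 : St.f Cc ≤ St.f (chain n).u := St.hfanti.antitoneOn hUnm hCcm (hceil n)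
    have m2 : St.g (St.f (chain n).u) ≤ VV :=
      St.hganti.antitoneOn (St.hfmaps hCcm) (St.hfmaps hUnm) m1
    have hin : St.g (St.f (chain n).u) ∈ S := hS.mapg _ (hS.mapf _ (chain n).hu)
    have hgt' : (chain n).u < St.g (St.f (chain n).u) :=
      St.hgt _ ⟨(chain n).h0.le, lt_trans (chain n).hlt (chain n).h1⟩
    have hge' : (chain n).v ≤ St.g (St.f (chain n).u) := by
      by_contra hcon
      push_neg at hcon
      have : St.g (St.f (chain n).u) ∈ Set.Ioo (chain n).u (chain n).v ∩ S :=
        ⟨⟨hgt', hcon⟩, hin⟩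
      rw [(chain n).hdis] at this
      exact this
    linarith
  have hM : ∀ n, (chain n).R ≤ VV * (1 - UU) / (UU * (1 - VV)) := by
    intro n
    rw [Gap.R]
    exact ratio_mono hUU0 (hUU n) (chain n).hlt (hVV n) hVV1
  -- epsilon choice
  set t₀ := min 1 ((R₀ - 1)/4) with ht₀def
  have ht₀0 : 0 < t₀ := lt_min one_pos (by linarith)
  set ε := min UU (1 - VV) * t₀ with hεdef
  have hε0 : 0 < ε := mul_pos (lt_min hUU0 (by linarith)) ht₀0
  clear_value a b c₀ R₀ ρ Cc UU VV t₀ ε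
  by_cases hall : ∀ n, ε ≤ (chain n).v - (chain n).u
  · -- exponential growth, contradiction with hM
    have hfac : (1:ℝ) < 1 + c₀ * ε := by
      have := mul_pos hc₀ hε0; linarith
    have hgrow : ∀ n, R₀ * (1 + c₀ * ε)^n ≤ (chain n).R := by
      intro n
      induction n with
      | zero => rw [pow_zero, mul_one]; exact hRmono 0
      | succ n ih =>
        calc R₀ * (1 + c₀ * ε)^(n+1) = (R₀ * (1 + c₀ * ε)^n) * (1 + c₀ * ε) := by ring
          _ ≤ (chain n).R * (1 + c₀ * ((chain n).v - (chain n).u)) := by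
              apply mul_le_mul ih ?_ (by have := mul_pos hc₀ hε0; linarith) (chain n).R_pos.le
              have h' := mul_le_mul_of_nonneg_left (hall n) hc₀.le
              linarith
          _ ≤ (chain (n+1)).R := hgain n
    obtain ⟨n, hn⟩ := pow_unbounded_of_one_lt (VV * (1 - UU) / (UU * (1 - VV)) / R₀) hfac
    have hcon : VV * (1 - UU) / (UU * (1 - VV)) < R₀ * (1 + c₀ * ε)^n := by
      rw [div_lt_iff₀ (by linarith : (0:ℝ) < R₀)] at hn
      linarith
    linarith [hgrow n, hM n]
  · push_neg at hall
    obtain ⟨n, hn⟩ := hall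
    -- final squeeze
    have hd0 : 0 < (chain n).v - (chain n).u := by linarith [(chain n).hlt]
    have hεU : ε ≤ UU * t₀ := by
      rw [hεdef]; exact mul_le_mul_of_nonneg_right (min_le_left _ _) ht₀0.le
    have hεV : ε ≤ (1 - VV) * t₀ := by
      rw [hεdef]; exact mul_le_mul_of_nonneg_right (min_le_right _ _) ht₀0.le
    have h1 : (chain n).v ≤ (chain n).u * (1 + t₀) := by
      have h' := mul_le_mul_of_nonneg_right (hUU n) ht₀0.le
      have e : (chain n).u * (1 + t₀) = (chain n).u + (chain n).u * t₀ := by ring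
      linarith
    have h2 : 1 - (chain n).u ≤ (1 - (chain n).v) * (1 + t₀) := by
      have h' := mul_le_mul_of_nonneg_right (show 1 - VV ≤ 1 - (chain n).v by linarith [hVV n])
        ht₀0.le
      have e : (1 - (chain n).v) * (1 + t₀) = (1 - (chain n).v) + (1 - (chain n).v) * t₀ := by
        ring
      linarith
    have h3 : (chain n).R ≤ (1 + t₀)^2 := by
      rw [Gap.R, div_le_iff₀ (chain n).den_pos]
      calc (chain n).v * (1 - (chain n).u)
          ≤ ((chain n).u * (1 + t₀)) * ((1 - (chain n).v) * (1 + t₀)) := by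
            apply mul_le_mul h1 h2 (by linarith [(chain n).hlt, (chain n).h1]) ?_
            have h0n := (chain n).h0
            nlinarith
        _ = (1 + t₀)^2 * ((chain n).u * (1 - (chain n).v)) := by ring
    have h4 : (1 + t₀)^2 ≤ 1 + 3*t₀ := by
      have h' : t₀ ≤ 1 := by rw [ht₀def]; exact min_le_left _ _
      have h'' := mul_le_mul_of_nonneg_right h' ht₀0.le
      have e : (1 + t₀)^2 = 1 + 2*t₀ + t₀*t₀ := by ring
      linarith
    have h5 : 1 + 3*t₀ < R₀ := by
      have : t₀ ≤ (R₀ - 1)/4 := by rw [ht₀def]; exact min_le_right _ _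
      linarith
    linarith [hRmono n, h3, h4, h5]

lemma iterate_conj (k : ℝ → ℝ) : ∀ (n : ℕ) (x : ℝ),
    (fun z => 1 - k (1 - z))^[n] x = 1 - k^[n] (1 - x) := by
  intro n
  induction n with
  | zero => intro x; simp
  | succ n ih =>
    intro x
    rw [Function.iterate_succ_apply, Function.iterate_succ_apply, ih]
    norm_num

lemma attract_conj {k : ℝ → ℝ} (h : IsAttractingFixedPt k 1) :
    IsAttractingFixedPt (fun z => 1 - k (1 - z)) 0 := by
  obtain ⟨hmem, hfix, ε, hε, hbasin⟩ := h
  refine ⟨⟨le_refl 0, zero_le_one⟩, by simp [hfix], ε, hε, fun x hx hxε => ?_⟩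
  have hx' : 1 - x ∈ Set.Icc (0:ℝ) 1 := by
    constructor <;> [linarith [hx.2]; linarith [hx.1]]
  have habs : |(1 - x) - 1| < ε := by
    have e : (1 - x) - 1 = -(x - 0) := by ring
    rw [e, abs_neg]
    exact hxε
  have ht := hbasin (1 - x) hx' habs
  have e : (fun n => (fun z => 1 - k (1 - z))^[n] x) = fun n => 1 - k^[n] (1 - x) :=
    funext (fun n => iterate_conj k n x)
  rw [e]
  have h' : Filter.Tendsto (fun n => 1 - k^[n] (1 - x)) Filter.atTop (nhds (1 - 1)) :=
    tendsto_const_nhds.sub ht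
  simpa using h'

lemma build_MSet (f g : ℝ → ℝ)
    (hfM : IsMobiusOn f) (hgM : IsMobiusOn g)
    (hfmaps : Set.MapsTo f (Set.Icc 0 1) (Set.Icc 0 1))
    (hgmaps : Set.MapsTo g (Set.Icc 0 1) (Set.Icc 0 1))
    (hfanti : StrictAntiOn f (Set.Icc 0 1)) (hganti : StrictAntiOn g (Set.Icc 0 1))
    (hfnotonto : f '' Set.Icc 0 1 ≠ Set.Icc 0 1)
    (hgnotonto : g '' Set.Icc 0 1 ≠ Set.Icc 0 1)
    (hcover : (f '' Set.Icc 0 1) ∪ (g '' Set.Icc 0 1) = Set.Icc 0 1)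
    (hf1 : f 1 = 0) (hg0 : g 0 = 1)
    (h₁ : IsAttractingFixedPt (f ∘ g) 0) (h₂ : IsAttractingFixedPt (g ∘ f) 1) :
    ∃ St : MSet, St.f = f ∧ St.g = g := by
  have hfcont := mobius_contOn hfM
  have hgcont := mobius_contOn hgM
  -- image identification
  have hfim : f '' Set.Icc 0 1 = Set.Icc 0 (f 0) := by
    apply Set.Subset.antisymm
    · rintro _ ⟨z, hz, rfl⟩
      constructor
      · rw [← hf1]; exact hfanti.antitoneOn hz i01_1 hz.2
      · exact hfanti.antitoneOn i01_0 hz hz.1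
    · intro t ht
      obtain ⟨z, hz, hzeq⟩ := anti_surj hfcont (by rw [hf1]; exact ht)
      exact ⟨z, hz, hzeq⟩
  have hgim : g '' Set.Icc 0 1 = Set.Icc (g 1) 1 := by
    apply Set.Subset.antisymm
    · rintro _ ⟨z, hz, rfl⟩
      constructor
      · exact hganti.antitoneOn hz i01_1 hz.2
      · rw [← hg0]; exact hganti.antitoneOn i01_0 hz hz.1
    · intro t ht
      obtain ⟨z, hz, hzeq⟩ := anti_surj hgcont (by rw [hg0]; exact ht)
      exact ⟨z, hz, hzeq⟩
  have ha1 : f 0 < 1 := by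
    rcases lt_or_eq_of_le (hfmaps i01_0).2 with h' | h'
    · exact h'
    · exfalso; apply hfnotonto; rw [hfim, h']
  have hb0 : 0 < g 1 := by
    rcases lt_or_eq_of_le (hgmaps i01_1).1 with h' | h'
    · exact h'
    · exfalso; apply hgnotonto; rw [hgim, ← h']
  have hba : g 1 ≤ f 0 := by
    by_contra hcon
    push_neg at hcon
    set t := (f 0 + g 1) / 2 with htdef
    have ht : t ∈ Set.Icc (0:ℝ) 1 := by
      constructor
      · have := (hfmaps i01_0).1; simp only [htdef]; linarith [(hgmaps i01_1).1]
      · have := (hgmaps i01_1).2; simp only [htdef]; linarith [(hfmaps i01_0).2]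
    rw [← hcover] at ht
    rcases ht with ht | ht
    · rw [hfim] at ht; simp only [htdef] at ht; have := ht.2; linarith
    · rw [hgim] at ht; simp only [htdef] at ht; have := ht.1; linarith
  -- h = f ∘ g analysis
  have hhM := mobius_comp hfM hgM hgmaps
  have hhmono : StrictMonoOn (f ∘ g) (Set.Icc 0 1) := by
    intro x hx y hy hxy
    exact hfanti (hgmaps hy) (hgmaps hx) (hganti hx hy hxy)
  have hhmaps : Set.MapsTo (f ∘ g) (Set.Icc 0 1) (Set.Icc 0 1) :=
    fun x hx => hfmaps (hgmaps hx)
  have hh0 : (f ∘ g) 0 = 0 := by simp [Function.comp_apply, hg0, hf1]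
  have hh1 : (f ∘ g) 1 < 1 := by
    have : f (g 1) < f 0 := hfanti i01_0 (hgmaps i01_1) hb0
    calc (f ∘ g) 1 = f (g 1) := rfl
      _ < f 0 := this
      _ < 1 := ha1
  have hlt := core_lt hhM hhmono hhmaps hh0 hh1 h₁
  have htend0 := core_tendsto (mobius_contOn hhM) hhmaps hlt hh0
  -- mirror analysis for k = g ∘ f
  have hkM := mobius_comp hgM hfM hfmaps
  have hHM : IsMobiusOn (fun x => 1 - (g ∘ f) (1 - x)) := mobius_mirror hkM
  have hkmono : StrictMonoOn (g ∘ f) (Set.Icc 0 1) := by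
    intro x hx y hy hxy
    exact hganti (hfmaps hy) (hfmaps hx) (hfanti hx hy hxy)
  have hHmono : StrictMonoOn (fun x => 1 - (g ∘ f) (1 - x)) (Set.Icc 0 1) := by
    intro x hx y hy hxy
    have hx' : 1 - x ∈ Set.Icc (0:ℝ) 1 := ⟨by linarith [hx.2], by linarith [hx.1]⟩
    have hy' : 1 - y ∈ Set.Icc (0:ℝ) 1 := ⟨by linarith [hy.2], by linarith [hy.1]⟩
    have := hkmono hy' hx' (by linarith)
    simp only
    linarith
  have hHmaps : Set.MapsTo (fun x => 1 - (g ∘ f) (1 - x)) (Set.Icc 0 1) (Set.Icc 0 1) := by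
    intro x hx
    have hx' : 1 - x ∈ Set.Icc (0:ℝ) 1 := ⟨by linarith [hx.2], by linarith [hx.1]⟩
    have hm := hgmaps (hfmaps hx')
    show 1 - (g ∘ f) (1 - x) ∈ Set.Icc (0:ℝ) 1
    simp only [Function.comp_apply]
    exact ⟨by linarith [hm.2], by linarith [hm.1]⟩
  have hH0 : (fun x : ℝ => 1 - (g ∘ f) (1 - x)) 0 = 0 := by
    simp [Function.comp_apply, hf1, hg0]
  have hH1 : (fun x : ℝ => 1 - (g ∘ f) (1 - x)) 1 < 1 := by
    simp only [sub_self, Function.comp_apply]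
    have : g 1 < g (f 0) := hganti (hfmaps i01_0) i01_1 ha1
    linarith
  have hHattr := attract_conj h₂
  have hHlt := core_lt hHM hHmono hHmaps hH0 hH1 hHattr
  have hHtend := core_tendsto (mobius_contOn hHM) hHmaps hHlt hH0
  have hgt : ∀ x ∈ Set.Ico (0:ℝ) 1, x < g (f x) := by
    intro x hx
    have h1x : 1 - x ∈ Set.Ioc (0:ℝ) 1 := ⟨by linarith [hx.2], by linarith [hx.1]⟩
    have := hHlt (1 - x) h1x
    simp only [Function.comp_apply] at this
    have e : 1 - (1 - x) = x := by ring
    rw [e] at this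
    exact by linarith
  have htend1 : ∀ x ∈ Set.Icc (0:ℝ) 1,
      Filter.Tendsto (fun n => (fun z => g (f z))^[n] x) Filter.atTop (nhds 1) := by
    intro x hx
    have hx' : 1 - x ∈ Set.Icc (0:ℝ) 1 := ⟨by linarith [hx.2], by linarith [hx.1]⟩
    have ht := hHtend (1 - x) hx'
    have e : ∀ n, (fun z => g (f z))^[n] x
        = 1 - (fun z => 1 - (g ∘ f) (1 - z))^[n] (1 - x) := by
      intro n
      rw [iterate_conj (g ∘ f) n (1 - x)]
      have e2 : 1 - (1 - x) = x := by ring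
      rw [e2]
      simp [Function.comp_def]
    have e3 : (fun n => (fun z => g (f z))^[n] x)
        = fun n => 1 - (fun z => 1 - (g ∘ f) (1 - z))^[n] (1 - x) := funext e
    rw [e3]
    have h' : Filter.Tendsto (fun n => 1 - (fun z => 1 - (g ∘ f) (1 - z))^[n] (1 - x))
        Filter.atTop (nhds (1 - 0)) := tendsto_const_nhds.sub ht
    simpa using h'
  refine ⟨⟨f, g, hfM, hgM, hfmaps, hgmaps, hfanti, hganti, hf1, hg0, ha1, hb0, hba,
    ?_, hgt, ?_, htend1⟩, rfl, rfl⟩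
  · exact hlt
  · intro x hx
    exact htend0 x hx

lemma foldr_not (F G : ℝ → ℝ) (x : ℝ) : ∀ w : List Bool,
    (w.map not).foldr (fun s z => if s then F z else G z) x
      = w.foldr (fun s z => if s then G z else F z) x := by
  intro w
  induction w with
  | nil => simp
  | cons s w ih => cases s <;> simp [ih]

lemma orb_swap (f g : ℝ → ℝ) (x : ℝ) : orbSet g f x
    = {y | ∃ w : List Bool, w ≠ [] ∧ y = w.foldr (fun s z => if s then f z else g z) x} := by
  ext yy
  constructor
  · rintro ⟨w, hw, rfl⟩
    exact ⟨w.map not, by simpa using hw, (foldr_not f g x w).symm⟩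
  · rintro ⟨w, hw, rfl⟩
    exact ⟨w.map not, by simpa using hw, (foldr_not g f x w).symm⟩

/-- decreasing, non-onto Möbius self-maps of [0,1] whose images cover
[0,1] and whose compositions have attracting fixed points {0,1} have all orbits
dense. -/
theorem stmt_18 (f g : ℝ → ℝ)
    (hfM : IsMobiusOn f) (hgM : IsMobiusOn g)
    (hfmaps : Set.MapsTo f (Set.Icc 0 1) (Set.Icc 0 1))
    (hgmaps : Set.MapsTo g (Set.Icc 0 1) (Set.Icc 0 1))
    (hfanti : StrictAntiOn f (Set.Icc 0 1)) (hganti : StrictAntiOn g (Set.Icc 0 1))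
    (hfnotonto : f '' Set.Icc 0 1 ≠ Set.Icc 0 1)
    (hgnotonto : g '' Set.Icc 0 1 ≠ Set.Icc 0 1)
    (hcover : (f '' Set.Icc 0 1) ∪ (g '' Set.Icc 0 1) = Set.Icc 0 1)
    (θ₁ θ₂ : ℝ)
    (h₁ : IsAttractingFixedPt (f ∘ g) θ₁) (h₂ : IsAttractingFixedPt (g ∘ f) θ₂)
    (hθ : ({θ₁, θ₂} : Set ℝ) = {0, 1}) :
    ∀ x ∈ Set.Ioo (0:ℝ) 1, Set.Icc (0:ℝ) 1 ⊆
      closure {y | ∃ w : List Bool, w ≠ [] ∧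
        y = w.foldr (fun s z => if s then f z else g z) x} := by
  intro x hx
  have hθ₁mem : θ₁ ∈ ({0, 1} : Set ℝ) := by rw [← hθ]; exact Set.mem_insert _ _
  have h1mem : (1:ℝ) ∈ ({θ₁, θ₂} : Set ℝ) := by
    rw [hθ]; exact Set.mem_insert_of_mem _ rfl
  have h0mem : (0:ℝ) ∈ ({θ₁, θ₂} : Set ℝ) := by rw [hθ]; exact Set.mem_insert _ _
  rcases hθ₁mem with hθ₁ | hθ₁
  · -- θ₁ = 0, θ₂ = 1
    have hθ₂ : θ₂ = 1 := by
      rcases h1mem with e | e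
      · exfalso; rw [hθ₁] at e; norm_num at e
      · exact e.symm
    rw [hθ₁] at h₁
    rw [hθ₂] at h₂
    have hfix : f (g 0) = 0 := h₁.2.1
    have hg0 : g 0 = 1 := by
      rcases lt_or_eq_of_le (hgmaps i01_0).2 with h' | h'
      · exfalso
        have := hfanti (hgmaps i01_0) i01_1 h'
        rw [hfix] at this
        linarith [(hfmaps i01_1).1]
      · exact h'
    have hf1 : f 1 = 0 := by rw [hg0] at hfix; exact hfix
    obtain ⟨St, hSf, hSg⟩ := build_MSet f g hfM hgM hfmaps hgmaps hfanti hganti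
      hfnotonto hgnotonto hcover hf1 hg0 h₁ h₂
    have hx' : x ∈ Set.Ioo (0:ℝ) 1 := hx
    have hdense := gaps_dense St (closure_orb_SInv St (by rw [hSf, hSg] at *; exact hx'))
    rw [hSf, hSg] at hdense
    exact hdense
  · -- θ₁ = 1, θ₂ = 0
    have hθ₂ : θ₂ = 0 := by
      rcases h0mem with e | e
      · exfalso; rw [hθ₁] at e; norm_num at e
      · exact e.symm
    rw [hθ₁] at h₁
    rw [hθ₂] at h₂
    have hfix : f (g 1) = 1 := h₁.2.1
    have hg1 : g 1 = 0 := by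
      rcases lt_or_eq_of_le (hgmaps i01_1).1 with h' | h'
      · exfalso
        have := hfanti i01_0 (hgmaps i01_1) (lt_of_eq_of_lt rfl h')
        rw [hfix] at this
        linarith [(hfmaps i01_0).2]
      · exact h'.symm
    have hf0 : f 0 = 1 := by rw [hg1] at hfix; exact hfix
    obtain ⟨St, hSf, hSg⟩ := build_MSet g f hgM hfM hgmaps hfmaps hganti hfanti
      hgnotonto hfnotonto (by rw [Set.union_comm]; exact hcover) hg1 hf0 h₂ h₁
    have hdense := gaps_dense St (closure_orb_SInv St (by rw [hSf, hSg] at *; exact hx))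
    rw [hSf, hSg] at hdense
    rw [orb_swap f g x] at hdense
    exact hdense
end

section
/- Let f(x) = x + 1 and g(x) = 1/x on (0,∞). The orbit of 1 under the semigroup generated by f and g equals the set of all positive rational numbers; in particular, the orbit of 1 is dense in (0,∞). -/
private lemma fold_pos_rat (w : List Bool) :
    ∃ q : ℚ, 0 < q ∧ w.foldr (fun s z => if s then z + 1 else 1 / z) (1:ℝ) = (q : ℝ) := by
  induction w with
  | nil => exact ⟨1, one_pos, by simp⟩
  | cons s w ih =>
    obtain ⟨q, hq, hval⟩ := ih
    cases s with
    | true => exact ⟨q + 1, by positivity, by simp only [List.foldr_cons, if_true, hval]; push_cast; ring⟩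
    | false => exact ⟨1 / q, by positivity, by simp only [List.foldr_cons, if_false, Bool.false_eq_true, hval]; push_cast; ring⟩

private lemma reach_frac : ∀ n a b : ℕ, 0 < a → 0 < b → a + b ≤ n →
    ∃ w : List Bool,
      w.foldr (fun s z => if s then z + 1 else 1 / z) (1:ℝ) = (a : ℝ) / b := by
  intro n
  induction n using Nat.strong_induction_on with
  | _ n ih =>
    intro a b ha hb hn
    rcases lt_trichotomy a b with hab | hab | hab
    · -- a < b : use (b-a)/a then false :: true :: w
      have hn' : b < n := by omega
      obtain ⟨w, hw⟩ := ih b hn' (b - a) a (by omega) ha (by omega)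
      refine ⟨false :: true :: w, ?_⟩
      simp only [List.foldr_cons, if_true, if_false, Bool.false_eq_true, hw]
      have hbc : ((b - a : ℕ) : ℝ) = (b : ℝ) - a := by
        rw [Nat.cast_sub (le_of_lt hab)]
      have ha' : (0:ℝ) < a := by exact_mod_cast ha
      have hb' : (0:ℝ) < b := by exact_mod_cast hb
      rw [hbc]
      field_simp
      rw [sub_add_cancel, div_self (ne_of_gt hb')]
    · subst hab
      refine ⟨[], ?_⟩
      have ha' : (0:ℝ) < a := by exact_mod_cast ha
      simp [div_self (ne_of_gt ha')]
    · -- b < a : use (a-b)/b then true :: w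
      have hn' : a < n := by omega
      obtain ⟨w, hw⟩ := ih a hn' (a - b) b (by omega) hb (by omega)
      refine ⟨true :: w, ?_⟩
      simp only [List.foldr_cons, if_true, hw]
      have hac : ((a - b : ℕ) : ℝ) = (a : ℝ) - b := by
        rw [Nat.cast_sub (le_of_lt hab)]
      have hb' : (0:ℝ) < b := by exact_mod_cast hb
      rw [hac]
      field_simp
      ring

/-- the orbit of 1 under the semigroup generated by x ↦ x + 1 and
x ↦ 1/x (together with 1 itself) is exactly the set of positive rationals, and in
particular is dense in (0,∞). -/
theorem stmt_19 :
    {y : ℝ | ∃ w : List Bool,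
        y = w.foldr (fun s z => if s then z + 1 else 1 / z) 1} =
      {y : ℝ | ∃ q : ℚ, 0 < q ∧ y = (q : ℝ)} ∧
    Set.Ioi (0:ℝ) ⊆ closure {y : ℝ | ∃ w : List Bool,
        y = w.foldr (fun s z => if s then z + 1 else 1 / z) 1} := by
  have hset : {y : ℝ | ∃ w : List Bool,
        y = w.foldr (fun s z => if s then z + 1 else 1 / z) 1} =
      {y : ℝ | ∃ q : ℚ, 0 < q ∧ y = (q : ℝ)} := by
    ext y
    constructor
    · rintro ⟨w, rfl⟩
      obtain ⟨q, hq, hval⟩ := fold_pos_rat w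
      exact ⟨q, hq, hval⟩
    · rintro ⟨q, hq, rfl⟩
      have hnum : 0 < q.num := Rat.num_pos.mpr hq
      obtain ⟨w, hw⟩ := reach_frac (q.num.natAbs + q.den) q.num.natAbs q.den
        (by omega) q.pos (le_refl _)
      refine ⟨w, ?_⟩
      rw [hw, Rat.cast_def]
      congr 1
      rw [Nat.cast_natAbs]
      simp [abs_of_pos (show (0:ℝ) < (q.num:ℝ) by exact_mod_cast hnum)]
  refine ⟨hset, ?_⟩
  rw [hset]
  intro x hx
  rw [Set.mem_Ioi] at hx
  rw [Metric.mem_closure_iff]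
  intro ε hε
  obtain ⟨q, hq1, hq2⟩ := exists_rat_btwn (show max (x - ε) 0 < x by
    simp [hx]; linarith)
  refine ⟨(q:ℝ), ⟨q, ?_, rfl⟩, ?_⟩
  · exact_mod_cast (lt_of_le_of_lt (le_max_right _ _) hq1)
  · rw [Real.dist_eq, abs_lt]
    have h3 : x - ε < (q:ℝ) := lt_of_le_of_lt (le_max_left _ _) hq1
    constructor <;> linarith
end
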